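/- arXiv:2011.08950 — 11 statements merged into one kernel-verified Lean document; each statement's English description precedes it below -/
import Mathlib

section
/- Let X be a topological space, let α : X → X be an aperiodic Borel measurable bijection with Borel measurable inverse, let F be a Banach function space on X satisfying condition Ω_α, and let w and 1/w both be weights on X. If the set 𝒫((C^{(n)}_{α,w})_{n∈ℕ₀}) of periodic elements is dense in F and lim_{n→∞} S^n_{α,w} f = 0 in F for every f ∈ 𝒫((C^{(n)}_{α,w})_{n∈ℕ₀}), then for every compact subset K of X there exist a sequence (D_k)_{k=1}^∞ of Borel subsets of K and a strictly increasing sequence (n_k) of positive integers such that lim_{k→∞} ‖χ_{K∖D_k}‖_F = 0 and lim_{k→∞} ‖χ_{D_k} · ∏_{s=1}^{n_k} (w∘α^{−s})‖_F = 0. -/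
open Filter Topology

/-- A Banach function space on `X`: a Banach space `F` together with an injective linear
embedding into the Borel measurable functions `X → ℂ`. -/
structure BanachFunctionSpace (X : Type*) [TopologicalSpace X] [MeasurableSpace X]
    (F : Type*) [NormedAddCommGroup F] [NormedSpace ℂ F] [CompleteSpace F] where
  toFunL : F →ₗ[ℂ] (X → ℂ)
  injective : Function.Injective toFunL
  measurable' : ∀ f : F, Measurable (toFunL f)

namespace BanachFunctionSpace

variable {X : Type*} [TopologicalSpace X] [MeasurableSpace X]
  {F : Type*} [NormedAddCommGroup F] [NormedSpace ℂ F] [CompleteSpace F]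

/-- `F` is solid: it contains, with controlled norm, every measurable function dominated
pointwise by a member of `F`. -/
def IsSolid (B : BanachFunctionSpace X F) : Prop :=
  ∀ (f : F) (g : X → ℂ), Measurable g → (∀ x, ‖g x‖ ≤ ‖B.toFunL f x‖) →
    ∃ g' : F, B.toFunL g' = g ∧ ‖g'‖ ≤ ‖f‖

/-- `F` is `α`-invariant: composition with `α` and `α⁻¹` preserves membership and the norm. -/
def IsInvariant (B : BanachFunctionSpace X F) (α : X ≃ X) : Prop :=
  ∀ f : F, (∃ g : F, B.toFunL g = B.toFunL f ∘ ⇑α ∧ ‖g‖ = ‖f‖) ∧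
    (∃ g : F, B.toFunL g = B.toFunL f ∘ ⇑α.symm ∧ ‖g‖ = ‖f‖)

/-- The characteristic function of every compact subset of `X` belongs to `F`. -/
def HasCompactIndicators (B : BanachFunctionSpace X F) : Prop :=
  ∀ E : Set X, IsCompact E → ∃ f : F, B.toFunL f = Set.indicator E 1

/-- The bounded compactly supported functions in `F` are dense in `F`. -/
def DenseBoundedCompact (B : BanachFunctionSpace X F) : Prop :=
  Dense {f : F | (∃ C : ℝ, ∀ x, ‖B.toFunL f x‖ ≤ C) ∧
    ∃ K : Set X, IsCompact K ∧ ∀ x ∉ K, B.toFunL f x = 0}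

/-- Condition `Ω_α`. -/
def ConditionOmega (B : BanachFunctionSpace X F) (α : X ≃ X) : Prop :=
  B.IsSolid ∧ B.IsInvariant α ∧ B.HasCompactIndicators ∧ B.DenseBoundedCompact

end BanachFunctionSpace

/-- `w` and `1/w` are both weights: `w` is Borel measurable, bounded above, and bounded
away from `0`. -/
def IsWeightPair {X : Type*} [MeasurableSpace X] (w : X → ℝ) : Prop :=
  Measurable w ∧ (∃ C : ℝ, ∀ x, w x ≤ C) ∧ ∃ c : ℝ, 0 < c ∧ ∀ x, c ≤ w x

/-- `α` is aperiodic: every compact set is eventually moved off itself by the iterates. -/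
def Aperiodic {X : Type*} [TopologicalSpace X] (α : X ≃ X) : Prop :=
  ∀ K : Set X, IsCompact K → ∃ N : ℕ, 0 < N ∧ ∀ n ≥ N, (⇑α)^[n] '' K ∩ K = ∅

/-- The cosine operator sequence `C⁽ⁿ⁾ = (1/2)(Tⁿ + Sⁿ)`. -/
noncomputable def cosOp {F : Type*} [NormedAddCommGroup F] [NormedSpace ℂ F]
    (T S : F →L[ℂ] F) (n : ℕ) : F →L[ℂ] F :=
  (2 : ℂ)⁻¹ • (T ^ n + S ^ n)

/-- The set of periodic elements of a sequence of operators. -/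
def periodicSet {F : Type*} [NormedAddCommGroup F] [NormedSpace ℂ F]
    (C : ℕ → F →L[ℂ] F) : Set F :=
  {f | ∃ N : ℕ, 0 < N ∧ ∀ k : ℕ, 0 < k → C (k * N) f = f}

/-- Topological transitivity of a sequence of operators. -/
def TopTransitive {F : Type*} [NormedAddCommGroup F] [NormedSpace ℂ F]
    (C : ℕ → F →L[ℂ] F) : Prop :=
  ∀ U V : Set F, IsOpen U → IsOpen V → U.Nonempty → V.Nonempty →
    ∃ n : ℕ, 0 < n ∧ (⇑(C n) '' U ∩ V).Nonempty

/-- A sequence of operators is chaotic if it is topologically transitive and its set of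
periodic elements is dense. -/
def IsChaotic {F : Type*} [NormedAddCommGroup F] [NormedSpace ℂ F]
    (C : ℕ → F →L[ℂ] F) : Prop :=
  TopTransitive C ∧ Dense (periodicSet C)

private lemma symm_iter_aux {X : Type*} (α : X ≃ X) : ∀ (s m : ℕ) (x : X),
    (⇑α.symm)^[s] ((⇑α)^[s + m] x) = (⇑α)^[m] x := by
  intro s
  induction s with
  | zero => simp
  | succ s ih =>
    intro m x
    have h1 : s + 1 + m = (s + m) + 1 := by omega
    rw [h1, Function.iterate_succ_apply (⇑α.symm), Function.iterate_succ_apply' (⇑α),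
      α.symm_apply_apply, ih]

private lemma prod_reindex_aux {X : Type*} (α : X ≃ X) (w : X → ℝ) (n : ℕ) (x : X) :
    (∏ s ∈ Finset.Icc 1 n, w ((⇑α.symm)^[s] ((⇑α)^[n] x))) =
      ∏ s ∈ Finset.range n, w ((⇑α)^[s] x) := by
  have key : ∀ s ∈ Finset.Icc 1 n, w ((⇑α.symm)^[s] ((⇑α)^[n] x)) = w ((⇑α)^[n - s] x) := by
    intro s hs
    obtain ⟨h1, h2⟩ := Finset.mem_Icc.mp hs
    have h3 : n = s + (n - s) := by omega
    rw [show ((⇑α)^[n] x) = ((⇑α)^[s + (n-s)] x) by rw [← h3], symm_iter_aux]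
  rw [Finset.prod_congr rfl key]
  apply Finset.prod_nbij' (fun s => n - s) (fun t => n - t)
  · intro a ha; simp only [Finset.mem_Icc] at ha; simp only [Finset.mem_range]; omega
  · intro a ha; simp only [Finset.mem_range] at ha; simp only [Finset.mem_Icc]; omega
  · intro a ha; simp only [Finset.mem_Icc] at ha; omega
  · intro a ha; simp only [Finset.mem_range] at ha; omega
  · intro a ha; rfl

private lemma T_pow_apply_aux {X : Type*} [TopologicalSpace X] [MeasurableSpace X]
    {F : Type*} [NormedAddCommGroup F] [NormedSpace ℂ F] [CompleteSpace F]
    (B : BanachFunctionSpace X F) (α : X ≃ X) (w : X → ℝ) (T : F →L[ℂ] F)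
    (hT : ∀ (f : F) (x : X), B.toFunL (T f) x = (w x : ℂ) * B.toFunL f (α x)) :
    ∀ (n : ℕ) (f : F) (x : X),
      B.toFunL ((T ^ n) f) x =
        (∏ s ∈ Finset.range n, (w ((⇑α)^[s] x) : ℂ)) * B.toFunL f ((⇑α)^[n] x) := by
  intro n
  induction n with
  | zero => intro f x; simp
  | succ n ih =>
    intro f x
    have hp : (T ^ (n + 1)) f = T ((T ^ n) f) := by rw [pow_succ']; rfl
    rw [hp, hT, ih, Finset.prod_range_succ']
    simp only [Function.iterate_succ_apply, Function.iterate_zero_apply]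
    ring

private lemma invariant_iterate_aux {X : Type*} [TopologicalSpace X] [MeasurableSpace X]
    {F : Type*} [NormedAddCommGroup F] [NormedSpace ℂ F] [CompleteSpace F]
    (B : BanachFunctionSpace X F) (α : X ≃ X) (hinv : B.IsInvariant α) :
    ∀ (n : ℕ) (q : F), ∃ h : F, B.toFunL h = B.toFunL q ∘ (⇑α.symm)^[n] ∧ ‖h‖ = ‖q‖ := by
  intro n
  induction n with
  | zero => intro q; exact ⟨q, by simp, rfl⟩
  | succ n ih =>
    intro q
    obtain ⟨h', hh', hn'⟩ := ih q
    obtain ⟨h, hh, hn⟩ := (hinv h').2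
    refine ⟨h, ?_, hn.trans hn'⟩
    rw [hh, hh', Function.iterate_succ]
    rfl

private lemma stmt0_step {X : Type*} [TopologicalSpace X] [MeasurableSpace X]
    {F : Type*} [NormedAddCommGroup F] [NormedSpace ℂ F] [CompleteSpace F]
    (B : BanachFunctionSpace X F) (α : X ≃ X)
    (hmα : Measurable (⇑α)) (hmαs : Measurable (⇑α.symm))
    (hsolid : B.IsSolid) (hinv : B.IsInvariant α)
    (w : X → ℝ) (hw : IsWeightPair w) (T : F →L[ℂ] F)
    (hT : ∀ (f : F) (x : X), B.toFunL (T f) x = (w x : ℂ) * B.toFunL f (α x)) (S : F →L[ℂ] F)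
    (hdense : Dense (periodicSet (cosOp T S)))
    (hlim : ∀ f ∈ periodicSet (cosOp T S), Tendsto (fun n : ℕ => (S ^ n) f) atTop (𝓝 0))
    (K : Set X) (f₀ : F) (hf₀ : B.toFunL f₀ = Set.indicator K 1)
    (N₀ : ℕ) (hN₀ : ∀ n ≥ N₀, (⇑α)^[n] '' K ∩ K = ∅)
    (ε : ℝ) (hε0 : 0 < ε) (hεhalf : ε ≤ 1/2) (m : ℕ) :
    ∃ (D : Set X) (n : ℕ) (g h : F), MeasurableSet D ∧ D ⊆ K ∧ m < n ∧
      B.toFunL g = Set.indicator (K \ D) 1 ∧ ‖g‖ ≤ ε ∧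
      B.toFunL h = Set.indicator D
        (fun x => ((∏ s ∈ Finset.Icc 1 n, w ((⇑α.symm)^[s] x) : ℝ) : ℂ)) ∧
      ‖h‖ ≤ 6 * ε := by
  obtain ⟨hwmeas, ⟨Cw, hCw⟩, cw, hcw0, hcw⟩ := hw
  have hwpos : ∀ x, 0 < w x := fun x => lt_of_lt_of_le hcw0 (hcw x)
  -- K is measurable
  have hKmeas : MeasurableSet K := by
    have h1 : K = (B.toFunL f₀) ⁻¹' {1} := by
      ext x
      simp only [Set.mem_preimage, Set.mem_singleton_iff, hf₀, Set.indicator_apply,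
        Pi.one_apply]
      by_cases hx : x ∈ K <;> simp [hx]
    rw [h1]
    exact (B.measurable' f₀) (measurableSet_singleton 1)
  -- pick a periodic element close to f₀
  obtain ⟨f, hfper, hfd⟩ := hdense.exists_dist_lt f₀ (by positivity : (0:ℝ) < ε^2)
  have hfnorm : ‖f₀ - f‖ ≤ ε^2 := le_of_lt (by rwa [dist_eq_norm] at hfd)
  set φ := B.toFunL f with hφ
  have hφmeas : Measurable φ := B.measurable' f
  -- the exceptional set E and good set D
  set E := {x | x ∈ K ∧ ε ≤ ‖φ x - 1‖} with hE
  have hEK : E ⊆ K := fun x hx => hx.1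
  have hEmeas : MeasurableSet E := by
    have : MeasurableSet {x | ε ≤ ‖φ x - 1‖} :=
      measurableSet_le measurable_const ((hφmeas.sub measurable_const).norm)
    exact hKmeas.inter this
  set D := K \ E with hD
  have hDmeas : MeasurableSet D := hKmeas.diff hEmeas
  have hDsub : D ⊆ K := Set.diff_subset
  have hKD : K \ D = E := by
    rw [hD, Set.diff_diff_right_self, Set.inter_eq_self_of_subset_right hEK]
  -- the function g
  have hdom1 : ∀ x, ‖Set.indicator E (1 : X → ℂ) x‖ ≤
      ‖B.toFunL (((ε⁻¹ : ℝ) : ℂ) • (f₀ - f)) x‖ := by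
    intro x
    rw [map_smul]
    by_cases hx : x ∈ E
    · rw [Set.indicator_of_mem hx, Pi.one_apply, Pi.smul_apply, norm_smul]
      have hx1 : B.toFunL (f₀ - f) x = 1 - φ x := by
        rw [map_sub, hf₀]
        simp only [Pi.sub_apply, Set.indicator_of_mem (hEK hx), Pi.one_apply, hφ]
      rw [hx1]
      have h2 : ε ≤ ‖(1 : ℂ) - φ x‖ := by
        rw [← norm_neg]; simpa [neg_sub] using hx.2
      have h3 : ‖((ε⁻¹ : ℝ) : ℂ)‖ = ε⁻¹ := by
        rw [Complex.norm_real, Real.norm_of_nonneg (by positivity)]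
      rw [h3, norm_one]
      calc (1:ℝ) = ε⁻¹ * ε := by field_simp
      _ ≤ ε⁻¹ * ‖(1 : ℂ) - φ x‖ := by
        apply mul_le_mul_of_nonneg_left h2 (by positivity)
    · rw [Set.indicator_of_notMem hx, norm_zero]
      exact norm_nonneg _
  obtain ⟨g, hg, hgn⟩ := hsolid (((ε⁻¹ : ℝ) : ℂ) • (f₀ - f)) (Set.indicator E (1 : X → ℂ))
    ((measurable_const.indicator hEmeas)) hdom1
  have hgnorm : ‖g‖ ≤ ε := by
    refine hgn.trans ?_
    rw [norm_smul, Complex.norm_real, Real.norm_of_nonneg (by positivity)]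
    calc ε⁻¹ * ‖f₀ - f‖ ≤ ε⁻¹ * ε^2 := by
          exact mul_le_mul_of_nonneg_left hfnorm (by positivity)
    _ = ε := by field_simp
  -- choose n
  obtain ⟨N, hNpos, hNper⟩ := hfper
  have hlimf := hlim f ⟨N, hNpos, hNper⟩
  rw [Metric.tendsto_atTop] at hlimf
  obtain ⟨M, hM⟩ := hlimf ε hε0
  set j := max (max M N₀) (m + 1) with hj
  have hjpos : 0 < j := lt_of_lt_of_le (Nat.succ_pos m) (le_max_right _ _)
  set n := j * N with hn
  have hjn : j ≤ n := Nat.le_mul_of_pos_right j hNpos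
  have hnm : m < n := lt_of_lt_of_le (Nat.lt_succ_self m) ((le_max_right _ _).trans hjn)
  have hnN₀ : N₀ ≤ n := ((le_max_right M N₀).trans (le_max_left _ _)).trans hjn
  have hnM : M ≤ n := ((le_max_left M N₀).trans (le_max_left _ _)).trans hjn
  have hSn : ‖(S ^ n) f‖ ≤ ε := by
    have := hM n hnM
    rw [dist_zero_right] at this
    exact le_of_lt this
  -- periodic identity
  have hper : (T ^ n) f = (2:ℂ) • f - (S ^ n) f := by
    have h1 := hNper j hjpos
    simp only [cosOp, ContinuousLinearMap.smul_apply, ContinuousLinearMap.add_apply] at h1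
    have h2 : (T ^ n) f + (S ^ n) f = (2:ℂ) • f := by
      have h3 : (2:ℂ) • ((2:ℂ)⁻¹ • ((T ^ (j*N)) f + (S ^ (j*N)) f)) = (2:ℂ) • f := by
        rw [h1]
      rw [smul_smul] at h3
      norm_num at h3
      rw [hn]
      norm_num
      exact h3
    exact eq_sub_of_add_eq h2
  -- the element u
  set u := (2:ℂ) • (f - f₀) - (S ^ n) f with hu
  have hunorm : ‖u‖ ≤ 3 * ε := by
    calc ‖u‖ ≤ ‖(2:ℂ) • (f - f₀)‖ + ‖(S ^ n) f‖ := norm_sub_le _ _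
    _ ≤ 2 * ε^2 + ε := by
        rw [norm_smul]
        have : ‖(2:ℂ)‖ = 2 := by norm_num
        rw [this, norm_sub_rev]
        have := mul_le_mul_of_nonneg_left hfnorm (by norm_num : (0:ℝ) ≤ 2)
        linarith
    _ ≤ 3 * ε := by nlinarith
  -- the transported weight function
  set v : X → ℝ := fun x => ∏ s ∈ Finset.Icc 1 n, w ((⇑α.symm)^[s] x) with hv
  set ψ : X → ℂ := fun y => Set.indicator D (fun x => ((v x : ℝ) : ℂ)) ((⇑α)^[n] y) with hψ
  have hvmeas : Measurable v :=
    Finset.measurable_prod _ (fun s _ => hwmeas.comp (hmαs.iterate s))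
  have hψmeas : Measurable ψ :=
    ((Complex.measurable_ofReal.comp hvmeas).indicator hDmeas).comp (hmα.iterate n)
  have h1ε : (0:ℝ) < 1 - ε := by linarith
  have hdom2 : ∀ y, ‖ψ y‖ ≤ ‖B.toFunL ((((1 - ε)⁻¹ : ℝ) : ℂ) • u) y‖ := by
    intro y
    by_cases hy : (⇑α)^[n] y ∈ D
    · have hpv : v ((⇑α)^[n] y) = ∏ s ∈ Finset.range n, w ((⇑α)^[s] y) :=
        prod_reindex_aux α w n y
      set p := ∏ s ∈ Finset.range n, w ((⇑α)^[s] y) with hp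
      have hppos : 0 < p := Finset.prod_pos (fun s _ => hwpos _)
      have hψy : ‖ψ y‖ = p := by
        rw [hψ]
        simp only [Set.indicator_of_mem hy]
        rw [hpv, Complex.norm_real, Real.norm_of_nonneg (le_of_lt hppos)]
      -- y not in K
      have hyK : y ∉ K := by
        intro hyK
        have h4 := hN₀ n hnN₀
        have : (⇑α)^[n] y ∈ (⇑α)^[n] '' K ∩ K := ⟨⟨y, hyK, rfl⟩, hDsub hy⟩
        rw [h4] at this
        exact this
      -- T^n f equals u at y
      have hTu : B.toFunL ((T ^ n) f) y = B.toFunL u y := by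
        rw [hper, hu]
        simp only [map_sub, map_smul, Pi.sub_apply, Pi.smul_apply, map_sub]
        have : B.toFunL f₀ y = 0 := by
          rw [hf₀, Set.indicator_of_notMem hyK]
        rw [this]
        ring_nf
      -- lower bound on |φ(α^n y)|
      have hφlb : 1 - ε ≤ ‖φ ((⇑α)^[n] y)‖ := by
        have h5 : ¬ ε ≤ ‖φ ((⇑α)^[n] y) - 1‖ := by
          intro hcon
          exact hy.2 ⟨hDsub hy, hcon⟩
        push_neg at h5
        have h6 : ‖(1:ℂ)‖ ≤ ‖φ ((⇑α)^[n] y)‖ + ‖φ ((⇑α)^[n] y) - 1‖ := by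
          have h7 : (1:ℂ) = φ ((⇑α)^[n] y) - (φ ((⇑α)^[n] y) - 1) := by ring
          nth_rewrite 1 [h7]
          exact norm_sub_le _ _
        rw [norm_one] at h6
        linarith
      -- value of T^n f at y
      have hTval : ‖B.toFunL ((T ^ n) f) y‖ = p * ‖φ ((⇑α)^[n] y)‖ := by
        have hnp : ‖(∏ s ∈ Finset.range n, ((w ((⇑α)^[s] y) : ℝ) : ℂ))‖ = p := by
          rw [← Complex.ofReal_prod, Complex.norm_real]
          exact Real.norm_of_nonneg (le_of_lt hppos)
        rw [T_pow_apply_aux B α w T hT n f y, norm_mul, hnp]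
      have hlow : p * (1 - ε) ≤ ‖B.toFunL u y‖ := by
        rw [← hTu, hTval]
        exact mul_le_mul_of_nonneg_left hφlb (le_of_lt hppos)
      rw [hψy, map_smul, Pi.smul_apply, norm_smul, Complex.norm_real,
        Real.norm_of_nonneg (le_of_lt (inv_pos.mpr h1ε))]
      calc p = (1 - ε)⁻¹ * (p * (1 - ε)) := by field_simp
      _ ≤ (1 - ε)⁻¹ * ‖B.toFunL u y‖ := by
          exact mul_le_mul_of_nonneg_left hlow (le_of_lt (inv_pos.mpr h1ε))
    · rw [hψ]
      simp only [Set.indicator_of_notMem hy, norm_zero]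
      exact norm_nonneg _
  obtain ⟨q, hq, hqn⟩ := hsolid _ ψ hψmeas hdom2
  have hqnorm : ‖q‖ ≤ 6 * ε := by
    refine hqn.trans ?_
    rw [norm_smul, Complex.norm_real, Real.norm_of_nonneg (le_of_lt (inv_pos.mpr h1ε))]
    have h8 : (1 - ε)⁻¹ ≤ 2 := by
      rw [inv_le_comm₀ h1ε (by norm_num)]
      linarith
    have h9 := mul_le_mul h8 hunorm (norm_nonneg u) (by norm_num : (0:ℝ) ≤ 2)
    linarith
  -- transport back via invariance
  obtain ⟨h, hh, hhn⟩ := invariant_iterate_aux B α hinv n q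
  have hhfun : B.toFunL h = Set.indicator D (fun x => ((v x : ℝ) : ℂ)) := by
    rw [hh, hq]
    funext x
    simp only [Function.comp_apply, hψ]
    rw [Function.LeftInverse.iterate α.apply_symm_apply n x]
  refine ⟨D, n, g, h, hDmeas, hDsub, hnm, ?_, hgnorm, ?_, by rw [hhn]; exact hqnorm⟩
  · rw [hg, hKD]
  · rw [hhfun]

/-- necessary condition (Theorem `main` of the paper) for density of the
periodic elements of the cosine operator sequence together with `Sⁿf → 0` on them. -/
theorem stmt0 {X : Type*} [TopologicalSpace X] [MeasurableSpace X] [BorelSpace X]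
    {F : Type*} [NormedAddCommGroup F] [NormedSpace ℂ F] [CompleteSpace F]
    (B : BanachFunctionSpace X F) (α : X ≃ X)
    (hmα : Measurable (⇑α)) (hmαs : Measurable (⇑α.symm))
    (hα : Aperiodic α) (hΩ : B.ConditionOmega α)
    (w : X → ℝ) (hw : IsWeightPair w) (T : F →L[ℂ] F)
    (hT : ∀ (f : F) (x : X), B.toFunL (T f) x = (w x : ℂ) * B.toFunL f (α x)) (S : F →L[ℂ] F) (hST : ∀ f : F, S (T f) = f) (hTS : ∀ f : F, T (S f) = f)
    (hdense : Dense (periodicSet (cosOp T S)))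
    (hlim : ∀ f ∈ periodicSet (cosOp T S), Tendsto (fun n : ℕ => (S ^ n) f) atTop (𝓝 0)) :
    ∀ K : Set X, IsCompact K →
      ∃ (D : ℕ → Set X) (nk : ℕ → ℕ) (g h : ℕ → F),
        (∀ k, MeasurableSet (D k)) ∧ (∀ k, D k ⊆ K) ∧
        StrictMono nk ∧ (∀ k, 0 < nk k) ∧
        (∀ k, B.toFunL (g k) = Set.indicator (K \ D k) 1) ∧
        Tendsto (fun k => ‖g k‖) atTop (𝓝 0) ∧
        (∀ k, B.toFunL (h k) = Set.indicator (D k)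
          (fun x => ((∏ s ∈ Finset.Icc 1 (nk k), w ((⇑α.symm)^[s] x) : ℝ) : ℂ))) ∧
        Tendsto (fun k => ‖h k‖) atTop (𝓝 0) := by
  intro K hK
  obtain ⟨hsolid, hinv, hci, -⟩ := hΩ
  obtain ⟨f₀, hf₀⟩ := hci K hK
  obtain ⟨N₀, hN₀0, hN₀⟩ := hα K hK
  have step : ∀ (k m : ℕ), ∃ (D : Set X) (n : ℕ) (g h : F), MeasurableSet D ∧ D ⊆ K ∧
      m < n ∧ B.toFunL g = Set.indicator (K \ D) 1 ∧ ‖g‖ ≤ ((k : ℝ) + 2)⁻¹ ∧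
      B.toFunL h = Set.indicator D
        (fun x => ((∏ s ∈ Finset.Icc 1 n, w ((⇑α.symm)^[s] x) : ℝ) : ℂ)) ∧
      ‖h‖ ≤ 6 * ((k : ℝ) + 2)⁻¹ := by
    intro k m
    have hk2 : (0:ℝ) < (k : ℝ) + 2 := by positivity
    refine stmt0_step B α hmα hmαs hsolid hinv w hw T hT S hdense hlim K f₀ hf₀ N₀ hN₀
      _ (by positivity) ?_ m
    rw [inv_le_comm₀ hk2 (by norm_num)]
    have : (0:ℝ) ≤ (k : ℝ) := Nat.cast_nonneg k
    linarith
  choose D' n' g' h' hmeas hsub hlt hg hgn hh hhn using step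
  let prev : ℕ → ℕ := fun k => Nat.rec 0 (fun k acc => n' k acc) k
  have hprev : ∀ k, prev (k + 1) = n' k (prev k) := fun k => rfl
  have hto : Tendsto (fun k : ℕ => ((k : ℝ) + 2)⁻¹) atTop (𝓝 0) :=
    tendsto_inv_atTop_zero.comp
      (tendsto_atTop_add_const_right atTop 2 tendsto_natCast_atTop_atTop)
  refine ⟨fun k => D' k (prev k), fun k => n' k (prev k), fun k => g' k (prev k),
    fun k => h' k (prev k), fun k => hmeas k _, fun k => hsub k _, ?_, ?_,
    fun k => hg k _, ?_, fun k => hh k _, ?_⟩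
  · apply strictMono_nat_of_lt_succ
    intro k
    have h1 := hlt (k + 1) (prev (k + 1))
    rw [hprev k] at h1
    exact h1
  · intro k
    exact Nat.lt_of_le_of_lt (Nat.zero_le _) (hlt k (prev k))
  · exact squeeze_zero (fun k => norm_nonneg _) (fun k => hgn k _) hto
  · have hto6 : Tendsto (fun k : ℕ => 6 * ((k : ℝ) + 2)⁻¹) atTop (𝓝 0) := by
      simpa using hto.const_mul (6 : ℝ)
    exact squeeze_zero (fun k => norm_nonneg _) (fun k => hhn k _) hto6
end

section
/- Let X be a topological space, let α : X → X be an aperiodic Borel measurable bijection with Borel measurable inverse, let F be a Banach function space on X satisfying condition Ω_α, and let w and 1/w both be weights on X. Suppose X has a compact subset K with ‖χ_K‖_F > 0. If inf_{x∈X} w(x) > 1, then the set 𝒫((C^{(n)}_{α,w})_{n∈ℕ₀}) of periodic elements is not dense in F; in particular, the sequence (C^{(n)}_{α,w})_{n∈ℕ₀} is not chaotic. -/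
open Filter Topology

/-- if `inf w > 1` then the periodic elements are not dense, so the cosine
operator sequence is not chaotic. -/
theorem stmt1 {X : Type*} [TopologicalSpace X] [MeasurableSpace X] [BorelSpace X]
    {F : Type*} [NormedAddCommGroup F] [NormedSpace ℂ F] [CompleteSpace F]
    (B : BanachFunctionSpace X F) (α : X ≃ X)
    (hmα : Measurable (⇑α)) (hmαs : Measurable (⇑α.symm))
    (hα : Aperiodic α) (hΩ : B.ConditionOmega α)
    (w : X → ℝ) (hw : IsWeightPair w) (T : F →L[ℂ] F)
    (hT : ∀ (f : F) (x : X), B.toFunL (T f) x = (w x : ℂ) * B.toFunL f (α x)) (S : F →L[ℂ] F) (hST : ∀ f : F, S (T f) = f) (hTS : ∀ f : F, T (S f) = f)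
    (K : Set X) (hK : IsCompact K) (cK : F)
    (hcK : B.toFunL cK = Set.indicator K 1) (hcKpos : 0 < ‖cK‖)
    (hinf : 1 < ⨅ x, w x) :
    ¬ Dense (periodicSet (cosOp T S)) ∧ ¬ IsChaotic (cosOp T S) := by
  classical
  have hbdd : BddBelow (Set.range w) := by
    obtain ⟨c0, hc0, hc0le⟩ := hw.2.2
    exact ⟨c0, by rintro y ⟨x, rfl⟩; exact hc0le x⟩
  set c : ℝ := ⨅ x, w x with hc
  have hc1 : 1 < c := hinf
  have hcpos : 0 < c := lt_trans one_pos hc1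
  have hcle : ∀ x, c ≤ w x := fun x => ciInf_le hbdd x
  have hwpos : ∀ x, 0 < w x := fun x => lt_of_lt_of_le hcpos (hcle x)
  have hsolid := hΩ.1
  have hinv := hΩ.2.1
  have hTgrow : ∀ f : F, c * ‖f‖ ≤ ‖T f‖ := by
    intro f
    obtain ⟨g, hg, hgnorm⟩ := (hinv (T f)).2
    have hdom : ∀ x, ‖B.toFunL ((c : ℂ) • f) x‖ ≤ ‖B.toFunL g x‖ := by
      intro x
      have h1 : B.toFunL ((c : ℂ) • f) x = (c : ℂ) * B.toFunL f x := by
        rw [map_smul]; simp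
      have h2 : B.toFunL g x = (w (α.symm x) : ℂ) * B.toFunL f x := by
        rw [hg]
        simp only [Function.comp_apply, hT, Equiv.apply_symm_apply]
      rw [h1, h2, norm_mul, norm_mul]
      apply mul_le_mul_of_nonneg_right _ (norm_nonneg _)
      rw [Complex.norm_real, Complex.norm_real, Real.norm_of_nonneg hcpos.le,
        Real.norm_of_nonneg (hwpos _).le]
      exact hcle _
    obtain ⟨g', hg', hg'le⟩ := hsolid g (B.toFunL ((c : ℂ) • f)) (B.measurable' _) hdom
    have hgg : g' = (c : ℂ) • f := B.injective hg'
    subst hgg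
    have hnorm : ‖(c : ℂ) • f‖ = c * ‖f‖ := by
      rw [norm_smul, Complex.norm_real, Real.norm_of_nonneg hcpos.le]
    rw [hnorm] at hg'le
    calc c * ‖f‖ ≤ ‖g‖ := hg'le
      _ = ‖T f‖ := hgnorm
  have hTn : ∀ (n : ℕ) (f : F), c ^ n * ‖f‖ ≤ ‖(T ^ n) f‖ := by
    intro n
    induction n with
    | zero => intro f; simp
    | succ n ih =>
      intro f
      have h1 : (T ^ (n + 1)) f = T ((T ^ n) f) := by
        rw [pow_succ']; rfl
      rw [h1]
      calc c ^ (n + 1) * ‖f‖ = c * (c ^ n * ‖f‖) := by ring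
        _ ≤ c * ‖(T ^ n) f‖ := mul_le_mul_of_nonneg_left (ih f) hcpos.le
        _ ≤ ‖T ((T ^ n) f)‖ := hTgrow _
  have hTSn : ∀ (n : ℕ) (f : F), (T ^ n) ((S ^ n) f) = f := by
    intro n
    induction n with
    | zero => intro f; simp
    | succ n ih =>
      intro f
      have h1 : (S ^ (n + 1)) f = (S ^ n) (S f) := by rw [pow_succ]; rfl
      have h2 : (T ^ (n + 1)) ((S ^ (n + 1)) f) = T ((T ^ n) ((S ^ n) (S f))) := by
        rw [h1, pow_succ']; rfl
      rw [h2, ih, hTS]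
  have hSn : ∀ (n : ℕ) (f : F), c ^ n * ‖(S ^ n) f‖ ≤ ‖f‖ := by
    intro n f
    have h := hTn n ((S ^ n) f)
    rwa [hTSn] at h
  have hper0 : periodicSet (cosOp T S) ⊆ {0} := by
    intro f hf
    obtain ⟨N, hN, hper⟩ := hf
    by_contra hf0
    have hfne : f ≠ 0 := by simpa using hf0
    have hfpos : 0 < ‖f‖ := norm_pos_iff.mpr hfne
    obtain ⟨k, hk⟩ := pow_unbounded_of_one_lt (3 : ℝ) hc1
    have hfeq := hper (k + 1) (Nat.succ_pos k)
    set m := (k + 1) * N with hm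
    have heq : (2 : ℂ) • f = (T ^ m) f + (S ^ m) f := by
      have hcos : cosOp T S m f = (2 : ℂ)⁻¹ • ((T ^ m) f + (S ^ m) f) := by
        simp [cosOp]
      rw [hcos] at hfeq
      have heq2 := congrArg (fun y : F => (2 : ℂ) • y) hfeq.symm
      simp only [smul_smul, show (2 : ℂ) * 2⁻¹ = 1 by norm_num, one_smul] at heq2
      exact heq2
    have hone_le : (1 : ℝ) ≤ c ^ m := one_le_pow₀ hc1.le
    have hSle : ‖(S ^ m) f‖ ≤ ‖f‖ := by
      have h1 := hSn m f
      nlinarith [norm_nonneg ((S ^ m) f)]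
    have hTle : ‖(T ^ m) f‖ ≤ 3 * ‖f‖ := by
      have ha : (T ^ m) f = (2 : ℂ) • f - (S ^ m) f := by rw [heq]; abel
      have h2 : ‖(2 : ℂ) • f‖ = 2 * ‖f‖ := by
        rw [norm_smul]; norm_num
      calc ‖(T ^ m) f‖ = ‖(2 : ℂ) • f - (S ^ m) f‖ := by rw [ha]
        _ ≤ ‖(2 : ℂ) • f‖ + ‖(S ^ m) f‖ := norm_sub_le _ _
        _ ≤ 2 * ‖f‖ + ‖f‖ := by rw [h2]; linarith
        _ = 3 * ‖f‖ := by ring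
    have hge := hTn m f
    have hkm : k ≤ m := by
      calc k ≤ k + 1 := Nat.le_succ k
        _ ≤ (k + 1) * N := Nat.le_mul_of_pos_right _ hN
    have hpow : (3 : ℝ) < c ^ m :=
      lt_of_lt_of_le hk (pow_le_pow_right₀ hc1.le hkm)
    nlinarith
  have hnd : ¬ Dense (periodicSet (cosOp T S)) := by
    intro hd
    have hd0 : Dense ({0} : Set F) := hd.mono hper0
    have hck : cK ∈ closure ({0} : Set F) := hd0 _
    rw [closure_singleton] at hck
    rw [Set.mem_singleton_iff.mp hck] at hcKpos
    simp at hcKpos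
  exact ⟨hnd, fun h => hnd h.2⟩
end

section
/- Let X be a topological space, let α : X → X be an aperiodic Borel measurable bijection with Borel measurable inverse, let F be a Banach function space on X satisfying condition Ω_α, and let w and 1/w both be weights on X. If the set 𝒫((C^{(n)}_{α,w})_{n∈ℕ₀}) of periodic elements is dense in F and lim_{n→∞} T^n_{α,w} f = 0 in F for every f ∈ 𝒫((C^{(n)}_{α,w})_{n∈ℕ₀}), then for every compact subset K of X there exist a sequence (D_k)_{k=1}^∞ of Borel subsets of K and a strictly increasing sequence (n_k) of positive integers such that lim_{k→∞} ‖χ_{K∖D_k}‖_F = 0 and lim_{k→∞} ‖χ_{D_k} · (∏_{s=0}^{n_k−1} (w∘α^{s}))^{−1}‖_F = 0. -/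
open Filter Topology

/-- necessary condition for density of the periodic elements of the cosine
operator sequence together with `Tⁿf → 0` on them. -/
theorem stmt2 {X : Type*} [TopologicalSpace X] [MeasurableSpace X] [BorelSpace X]
    {F : Type*} [NormedAddCommGroup F] [NormedSpace ℂ F] [CompleteSpace F]
    (B : BanachFunctionSpace X F) (α : X ≃ X)
    (hmα : Measurable (⇑α)) (hmαs : Measurable (⇑α.symm))
    (hα : Aperiodic α) (hΩ : B.ConditionOmega α)
    (w : X → ℝ) (hw : IsWeightPair w) (T : F →L[ℂ] F)
    (hT : ∀ (f : F) (x : X), B.toFunL (T f) x = (w x : ℂ) * B.toFunL f (α x)) (S : F →L[ℂ] F) (hST : ∀ f : F, S (T f) = f) (hTS : ∀ f : F, T (S f) = f)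
    (hdense : Dense (periodicSet (cosOp T S)))
    (hlim : ∀ f ∈ periodicSet (cosOp T S), Tendsto (fun n : ℕ => (T ^ n) f) atTop (𝓝 0)) :
    ∀ K : Set X, IsCompact K →
      ∃ (D : ℕ → Set X) (nk : ℕ → ℕ) (g h : ℕ → F),
        (∀ k, MeasurableSet (D k)) ∧ (∀ k, D k ⊆ K) ∧
        StrictMono nk ∧ (∀ k, 0 < nk k) ∧
        (∀ k, B.toFunL (g k) = Set.indicator (K \ D k) 1) ∧
        Tendsto (fun k => ‖g k‖) atTop (𝓝 0) ∧
        (∀ k, B.toFunL (h k) = Set.indicator (D k)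
          (fun x => (((∏ s ∈ Finset.range (nk k), w ((⇑α)^[s] x))⁻¹ : ℝ) : ℂ))) ∧
        Tendsto (fun k => ‖h k‖) atTop (𝓝 0) := by
  intro K hK
  classical
  obtain ⟨hsolid, hinv, hci, -⟩ := hΩ
  obtain ⟨hwm, ⟨Cw, hCw⟩, cw, hcw, hcwle⟩ := hw
  obtain ⟨u, hu⟩ := hci K hK
  have hKmeas : MeasurableSet K := by
    have hKeq : K = (B.toFunL u) ⁻¹' {1} := by
      ext x
      by_cases hx : x ∈ K <;> simp [hu, Set.indicator_apply, hx]
    rw [hKeq]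
    exact (B.measurable' u) (measurableSet_singleton 1)
  -- pointwise formula for T^n
  have Tpow : ∀ (n : ℕ) (f : F) (x : X),
      B.toFunL ((T ^ n) f) x
        = ((∏ s ∈ Finset.range n, w ((⇑α)^[s] x) : ℝ) : ℂ) * B.toFunL f ((⇑α)^[n] x) := by
    intro n
    induction n with
    | zero => intro f x; simp
    | succ n ih =>
      intro f x
      have h1 : (T ^ (n + 1)) f = (T ^ n) (T f) := by rw [pow_succ]; rfl
      rw [h1, ih (T f) x, hT f ((⇑α)^[n] x), Finset.prod_range_succ,
        Function.iterate_succ_apply']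
      push_cast
      ring
  -- positivity of the weight product
  have wpos : ∀ (n : ℕ) (x : X), 0 < ∏ s ∈ Finset.range n, w ((⇑α)^[s] x) := by
    intro n x
    exact Finset.prod_pos fun s _ => lt_of_lt_of_le hcw (hcwle _)
  -- iterate the invariance
  have comp_iter : ∀ (n : ℕ) (f : F),
      ∃ g : F, B.toFunL g = B.toFunL f ∘ (⇑α)^[n] ∧ ‖g‖ = ‖f‖ := by
    intro n
    induction n with
    | zero => intro f; exact ⟨f, by simp [Function.comp_def], rfl⟩
    | succ n ih =>
      intro f
      obtain ⟨g, hg, hgn⟩ := ih f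
      obtain ⟨⟨g', hg', hg'n⟩, -⟩ := hinv g
      refine ⟨g', ?_, hg'n.trans hgn⟩
      rw [hg', hg, Function.iterate_succ]
      rfl
  have TSpow : ∀ (n : ℕ) (f : F), (T ^ n) ((S ^ n) f) = f := by
    intro n
    induction n with
    | zero => intro f; simp
    | succ n ih =>
      intro f
      have h1 : (S ^ (n + 1)) f = (S ^ n) (S f) := by rw [pow_succ]; rfl
      have h2 : ∀ g : F, (T ^ (n + 1)) g = T ((T ^ n) g) := by
        intro g; rw [pow_succ']; rfl
      rw [h1, h2, ih (S f), hTS]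
  -- key pointwise formula for S^n
  have Spow : ∀ (n : ℕ) (f : F) (x : X),
      B.toFunL ((S ^ n) f) ((⇑α)^[n] x)
        = ((((∏ s ∈ Finset.range n, w ((⇑α)^[s] x))⁻¹ : ℝ)) : ℂ) * B.toFunL f x := by
    intro n f x
    have h1 := Tpow n ((S ^ n) f) x
    rw [TSpow n f] at h1
    have h2 : ((∏ s ∈ Finset.range n, w ((⇑α)^[s] x) : ℝ) : ℂ) ≠ 0 := by
      exact_mod_cast (wpos n x).ne'
    rw [h1, Complex.ofReal_inv]
    exact (inv_mul_cancel_left₀ h2 _).symm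
  obtain ⟨NK, hNK0, hNK⟩ := hα K hK
  -- the one-step construction
  have key : ∀ ε : ℝ, 0 < ε → ∀ L : ℕ, ∃ (D : Set X) (n : ℕ) (g h : F),
      MeasurableSet D ∧ D ⊆ K ∧ L < n ∧ 0 < n ∧
      B.toFunL g = Set.indicator (K \ D) 1 ∧ ‖g‖ ≤ ε ∧
      B.toFunL h = Set.indicator D
        (fun x => (((∏ s ∈ Finset.range n, w ((⇑α)^[s] x))⁻¹ : ℝ) : ℂ)) ∧ ‖h‖ ≤ ε := by
    intro ε hε L
    obtain ⟨f, hfper, hfu⟩ := hdense.exists_dist_lt u (show (0:ℝ) < ε/8 by positivity)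
    rw [dist_eq_norm, norm_sub_rev] at hfu
    have hTto := NormedAddCommGroup.tendsto_nhds_zero.mp (hlim f hfper) (ε/8)
      (by positivity)
    obtain ⟨N, hN0, hNf⟩ := hfper
    obtain ⟨M, hM⟩ := eventually_atTop.mp hTto
    set j : ℕ := M + NK + L + 1 with hj
    set n : ℕ := j * N with hn
    have hjn : j ≤ n := Nat.le_mul_of_pos_right j hN0
    have hnM : M ≤ n := le_trans (by omega) hjn
    have hnNK : NK ≤ n := le_trans (by omega) hjn
    have hnL : L < n := lt_of_lt_of_le (by omega) hjn
    have hn0 : 0 < n := lt_of_lt_of_le (by omega) hjn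
    -- periodicity relation
    have hSn : (S ^ n) f = (2 : ℂ) • f - (T ^ n) f := by
      have hC := hNf j (by omega)
      simp only [cosOp, ContinuousLinearMap.smul_apply, ContinuousLinearMap.add_apply,
        hn] at hC ⊢
      have h2 : (T ^ (j * N)) f + (S ^ (j * N)) f = (2 : ℂ) • f := by
        have := congrArg (fun v : F => (2 : ℂ) • v) hC
        simpa [smul_smul] using this
      exact eq_sub_of_add_eq' h2
    set D : Set X := K ∩ {x | (1:ℝ)/2 ≤ ‖B.toFunL f x‖} with hD
    have hDmeas : MeasurableSet D :=
      hKmeas.inter (measurableSet_le measurable_const (B.measurable' f).norm)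
    have hDK : D ⊆ K := Set.inter_subset_left
    -- first solid estimate
    set φ : X → ℂ := Set.indicator (K \ D) 1 with hφ
    have hφm : Measurable φ := measurable_const.indicator (hKmeas.diff hDmeas)
    have hφle : ∀ x, ‖φ x‖ ≤ ‖B.toFunL ((2:ℂ) • (f - u)) x‖ := by
      intro x
      by_cases hx : x ∈ K \ D
      · have hxK : x ∈ K := hx.1
        have hxD : ‖B.toFunL f x‖ < 1/2 := by
          by_contra hcon
          exact hx.2 ⟨hxK, le_of_not_gt hcon⟩
        have hux : B.toFunL u x = 1 := by
          rw [hu]; exact Set.indicator_of_mem hxK 1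
        have : B.toFunL ((2:ℂ) • (f - u)) x = 2 * (B.toFunL f x - 1) := by
          simp [map_smul, map_sub, hux]
        rw [this, hφ, Set.indicator_of_mem hx]
        have h1 : (1:ℝ) ≤ 2 * ‖B.toFunL f x - 1‖ := by
          have h0 := norm_sub_norm_le (1:ℂ) (B.toFunL f x)
          rw [norm_sub_rev, norm_one] at h0
          linarith
        calc ‖(1 : X → ℂ) x‖ = 1 := by norm_num
          _ ≤ 2 * ‖B.toFunL f x - 1‖ := h1
          _ = ‖(2 : ℂ) * (B.toFunL f x - 1)‖ := by
              rw [norm_mul]; norm_num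
      · rw [hφ, Set.indicator_of_notMem hx]
        simp [norm_nonneg]
    obtain ⟨g, hg, hgle⟩ := hsolid ((2:ℂ) • (f - u)) φ hφm hφle
    have hgε : ‖g‖ ≤ ε := by
      have : ‖(2:ℂ) • (f - u)‖ = 2 * ‖f - u‖ := by
        rw [norm_smul]; norm_num
      nlinarith [hgle, hfu, norm_nonneg (f - u)]
    -- second solid estimate
    set q : F := (2:ℂ) • (f - u) - (T ^ n) f with hq
    obtain ⟨qn, hqn, hqnn⟩ := comp_iter n q
    set e : F := (2:ℂ) • qn with he
    set ψ : X → ℂ := Set.indicator D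
      (fun x => (((∏ s ∈ Finset.range n, w ((⇑α)^[s] x))⁻¹ : ℝ) : ℂ)) with hψ
    have hψm : Measurable ψ := by
      refine Measurable.indicator ?_ hDmeas
      refine Complex.measurable_ofReal.comp (Measurable.inv ?_)
      exact Finset.measurable_prod _ fun s _ => hwm.comp (hmα.iterate s)
    have hψle : ∀ x, ‖ψ x‖ ≤ ‖B.toFunL e x‖ := by
      intro x
      by_cases hx : x ∈ D
      · have hxK : x ∈ K := hDK hx
        have hxf : (1:ℝ)/2 ≤ ‖B.toFunL f x‖ := hx.2
        have hanK : (⇑α)^[n] x ∉ K := by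
          intro hcon
          have : (⇑α)^[n] x ∈ (⇑α)^[n] '' K ∩ K := ⟨⟨x, hxK, rfl⟩, hcon⟩
          rw [hNK n hnNK] at this
          exact this
        have huan : B.toFunL u ((⇑α)^[n] x) = 0 := by
          rw [hu]; exact Set.indicator_of_notMem hanK 1
        have hqval : B.toFunL q ((⇑α)^[n] x)
            = B.toFunL ((S ^ n) f) ((⇑α)^[n] x) := by
          rw [hSn, hq]
          simp only [map_sub, map_smul, Pi.sub_apply, Pi.smul_apply, huan, smul_eq_mul]
          ring
        have hSval := Spow n f x
        have hBe : B.toFunL e x = 2 *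
            ((((∏ s ∈ Finset.range n, w ((⇑α)^[s] x))⁻¹ : ℝ) : ℂ) * B.toFunL f x) := by
          rw [he, map_smul]
          have : B.toFunL qn x = B.toFunL q ((⇑α)^[n] x) := by
            rw [hqn]; rfl
          simp only [Pi.smul_apply, this, hqval, hSval, smul_eq_mul]
        have hwinv : (0:ℝ) < (∏ s ∈ Finset.range n, w ((⇑α)^[s] x))⁻¹ :=
          inv_pos.mpr (wpos n x)
        rw [hψ, Set.indicator_of_mem hx, hBe]
        rw [norm_mul, norm_mul, Complex.norm_real]
        have h2 : ‖(2:ℂ)‖ = 2 := by norm_num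
        rw [h2, Real.norm_eq_abs, abs_of_pos hwinv]
        nlinarith [hwinv]
      · rw [hψ, Set.indicator_of_notMem hx]
        simp [norm_nonneg]
    obtain ⟨h, hh, hhle⟩ := hsolid e ψ hψm hψle
    have hhε : ‖h‖ ≤ ε := by
      have hTn : ‖(T ^ n) f‖ < ε/8 := hM n hnM
      have h2fu : ‖(2:ℂ) • (f - u)‖ = 2 * ‖f - u‖ := by rw [norm_smul]; norm_num
      have hqle : ‖q‖ ≤ 2 * ‖f - u‖ + ‖(T ^ n) f‖ := by
        rw [hq]
        calc ‖(2:ℂ) • (f - u) - (T ^ n) f‖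
            ≤ ‖(2:ℂ) • (f - u)‖ + ‖(T ^ n) f‖ := norm_sub_le _ _
          _ = 2 * ‖f - u‖ + ‖(T ^ n) f‖ := by rw [h2fu]
      have heq : ‖e‖ = 2 * ‖qn‖ := by rw [he, norm_smul]; norm_num
      rw [hqnn] at heq
      nlinarith [hhle]
    exact ⟨D, n, g, h, hDmeas, hDK, hnL, hn0, hg, hgε, hh, hhε⟩
  -- recursive construction
  choose Df nf gf hf hmeas hsub hlt hpos hgind hgle hhind hhle using
    fun k : ℕ => key (1/((k:ℝ)+1)) (by positivity)
  set Lf : ℕ → ℕ := fun k => Nat.rec 0 (fun k ih => nf k ih) k with hLf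
  have hLfsucc : ∀ k, Lf (k+1) = nf k (Lf k) := fun k => rfl
  refine ⟨fun k => Df k (Lf k), fun k => nf k (Lf k), fun k => gf k (Lf k),
    fun k => hf k (Lf k), fun k => hmeas k (Lf k), fun k => hsub k (Lf k), ?_,
    fun k => hpos k (Lf k), fun k => hgind k (Lf k), ?_, fun k => hhind k (Lf k), ?_⟩
  · refine strictMono_nat_of_lt_succ fun k => ?_
    have := hlt (k+1) (Lf (k+1))
    rwa [hLfsucc k] at this
  · refine squeeze_zero (fun k => norm_nonneg _) (fun k => hgle k (Lf k)) ?_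
    exact tendsto_one_div_add_atTop_nhds_zero_nat
  · refine squeeze_zero (fun k => norm_nonneg _) (fun k => hhle k (Lf k)) ?_
    exact tendsto_one_div_add_atTop_nhds_zero_nat
end

section
/- Let X be a topological space, let α : X → X be an aperiodic Borel measurable bijection with Borel measurable inverse, let F be a Banach function space on X satisfying condition Ω_α, and let w and 1/w both be weights on X. Suppose X has a compact subset K with ‖χ_K‖_F > 0. If sup_{x∈X} w(x) < 1, then the set 𝒫((C^{(n)}_{α,w})_{n∈ℕ₀}) of periodic elements is not dense in F; in particular, the sequence (C^{(n)}_{α,w})_{n∈ℕ₀} is not chaotic. -/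
open Filter Topology

/-- if `sup w < 1` then the periodic elements are not dense, so the cosine
operator sequence is not chaotic. -/
theorem stmt3 {X : Type*} [TopologicalSpace X] [MeasurableSpace X] [BorelSpace X]
    {F : Type*} [NormedAddCommGroup F] [NormedSpace ℂ F] [CompleteSpace F]
    (B : BanachFunctionSpace X F) (α : X ≃ X)
    (hmα : Measurable (⇑α)) (hmαs : Measurable (⇑α.symm))
    (hα : Aperiodic α) (hΩ : B.ConditionOmega α)
    (w : X → ℝ) (hw : IsWeightPair w) (T : F →L[ℂ] F)
    (hT : ∀ (f : F) (x : X), B.toFunL (T f) x = (w x : ℂ) * B.toFunL f (α x)) (S : F →L[ℂ] F) (hST : ∀ f : F, S (T f) = f) (hTS : ∀ f : F, T (S f) = f)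
    (K : Set X) (hK : IsCompact K) (cK : F)
    (hcK : B.toFunL cK = Set.indicator K 1) (hcKpos : 0 < ‖cK‖)
    (hsup : (⨆ x, w x) < 1) :
    ¬ Dense (periodicSet (cosOp T S)) ∧ ¬ IsChaotic (cosOp T S) := by
  -- X is nonempty, else cK = 0
  have hXne : Nonempty X := by
    by_contra hempty
    have : cK = (0 : F) := by
      apply B.injective
      funext x
      exact absurd ⟨x⟩ hempty
    rw [this, norm_zero] at hcKpos
    exact lt_irrefl _ hcKpos
  obtain ⟨x₀⟩ := hXne
  obtain ⟨hwm, ⟨C, hC⟩, c, hc, hcw⟩ := hw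
  set s : ℝ := ⨆ x, w x with hs
  have hbdd : BddAbove (Set.range w) := ⟨C, by rintro y ⟨x, rfl⟩; exact hC x⟩
  have hws : ∀ x, w x ≤ s := fun x => le_ciSup hbdd x
  have hs0 : 0 ≤ s := le_trans hc.le (le_trans (hcw x₀) (hws x₀))
  -- norm bound for T
  have hTbound : ∀ f : F, ‖T f‖ ≤ s * ‖f‖ := by
    intro f
    obtain ⟨hsolid, hinv, _, _⟩ := hΩ
    obtain ⟨g, hg, hgn⟩ := (hinv f).1
    have hpt : ∀ x, ‖B.toFunL (T f) x‖ ≤ ‖B.toFunL ((s : ℂ) • g) x‖ := by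
      intro x
      rw [hT f x, map_smul]
      have hx : ((((s : ℂ) • B.toFunL g) : X → ℂ)) x = (s : ℂ) * B.toFunL g x := rfl
      rw [hx, hg]
      simp only [norm_mul, Function.comp_apply, Complex.norm_real,
        Real.norm_of_nonneg hs0, Real.norm_of_nonneg (le_trans hc.le (hcw x))]
      exact mul_le_mul_of_nonneg_right (hws x) (norm_nonneg _)
    obtain ⟨g', hg', hg'n⟩ := hsolid ((s : ℂ) • g) (B.toFunL (T f)) (B.measurable' (T f)) hpt
    have hgT : g' = T f := B.injective hg'
    rw [hgT] at hg'n
    calc ‖T f‖ ≤ ‖(s : ℂ) • g‖ := hg'n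
      _ = s * ‖f‖ := by rw [norm_smul, Complex.norm_real, Real.norm_of_nonneg hs0, hgn]
  have hTn : ∀ (n : ℕ) (f : F), ‖(T ^ n) f‖ ≤ s ^ n * ‖f‖ := by
    intro n
    induction n with
    | zero => intro f; simp
    | succ n ih =>
      intro f
      rw [pow_succ, ContinuousLinearMap.mul_apply]
      calc ‖(T ^ n) (T f)‖ ≤ s ^ n * ‖T f‖ := ih (T f)
        _ ≤ s ^ n * (s * ‖f‖) :=
            mul_le_mul_of_nonneg_left (hTbound f) (pow_nonneg hs0 n)
        _ = s ^ (n + 1) * ‖f‖ := by ring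
  have hTSn : ∀ (n : ℕ) (f : F), (T ^ n) ((S ^ n) f) = f := by
    intro n
    induction n with
    | zero => intro f; simp
    | succ n ih =>
      intro f
      rw [pow_succ T n, pow_succ' S n, ContinuousLinearMap.mul_apply,
        ContinuousLinearMap.mul_apply, hTS, ih]
  -- every periodic element is 0
  have hper0 : ∀ f ∈ periodicSet (cosOp T S), f = (0 : F) := by
    intro f hf
    obtain ⟨N, hN, hper⟩ := hf
    have key : ∀ k : ℕ, 0 < k →
        f = (2 : ℂ) • (T ^ (k * N)) f - (T ^ (2 * (k * N))) f := by
      intro k hk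
      have h1 := hper k hk
      have h2 : (2 : ℂ)⁻¹ • ((T ^ (k * N)) f + (S ^ (k * N)) f) = f := by
        rw [← ContinuousLinearMap.add_apply, ← ContinuousLinearMap.smul_apply]
        exact h1
      have h3 : (T ^ (k * N)) f + (S ^ (k * N)) f = (2 : ℂ) • f := by
        conv_rhs => rw [← h2]
        rw [smul_smul, mul_inv_cancel₀ (two_ne_zero : (2 : ℂ) ≠ 0), one_smul]
      have h4 : (S ^ (k * N)) f = (2 : ℂ) • f - (T ^ (k * N)) f := by
        rw [eq_sub_iff_add_eq, add_comm]; exact h3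
      calc f = (T ^ (k * N)) ((S ^ (k * N)) f) := (hTSn _ f).symm
        _ = (T ^ (k * N)) ((2 : ℂ) • f - (T ^ (k * N)) f) := by rw [h4]
        _ = (2 : ℂ) • (T ^ (k * N)) f - (T ^ (2 * (k * N))) f := by
            rw [map_sub, map_smul, two_mul, pow_add, ContinuousLinearMap.mul_apply]
    have hnorm : ∀ k : ℕ, 0 < k → ‖f‖ ≤ 3 * s ^ k * ‖f‖ := by
      intro k hk
      have hkN : k ≤ k * N := Nat.le_mul_of_pos_right k hN
      have hsk : s ^ (k * N) ≤ s ^ k := pow_le_pow_of_le_one hs0 hsup.le hkN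
      have hsk2 : s ^ (2 * (k * N)) ≤ s ^ k :=
        pow_le_pow_of_le_one hs0 hsup.le (le_trans hkN (Nat.le_mul_of_pos_left (k * N) (by norm_num)))
      calc ‖f‖ = ‖(2 : ℂ) • (T ^ (k * N)) f - (T ^ (2 * (k * N))) f‖ := by
            rw [← key k hk]
        _ ≤ ‖(2 : ℂ) • (T ^ (k * N)) f‖ + ‖(T ^ (2 * (k * N))) f‖ := norm_sub_le _ _
        _ = 2 * ‖(T ^ (k * N)) f‖ + ‖(T ^ (2 * (k * N))) f‖ := by
            rw [norm_smul]; norm_num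
        _ ≤ 2 * (s ^ (k * N) * ‖f‖) + s ^ (2 * (k * N)) * ‖f‖ :=
            add_le_add (by linarith [hTn (k * N) f]) (hTn (2 * (k * N)) f)
        _ ≤ 2 * (s ^ k * ‖f‖) + s ^ k * ‖f‖ := by
            have ha := mul_le_mul_of_nonneg_right hsk (norm_nonneg f)
            have hb := mul_le_mul_of_nonneg_right hsk2 (norm_nonneg f)
            linarith
        _ = 3 * s ^ k * ‖f‖ := by ring
    have htend : Filter.Tendsto (fun k : ℕ => 3 * s ^ k * ‖f‖) Filter.atTop (nhds 0) := by
      have h := tendsto_pow_atTop_nhds_zero_of_lt_one hs0 hsup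
      have := (h.const_mul 3).mul_const ‖f‖
      simpa using this
    have hfle : ‖f‖ ≤ 0 := by
      refine ge_of_tendsto htend ?_
      filter_upwards [Filter.eventually_gt_atTop 0] with k hk
      exact hnorm k hk
    have : ‖f‖ = 0 := le_antisymm hfle (norm_nonneg f)
    exact norm_eq_zero.mp this
  have hnd : ¬ Dense (periodicSet (cosOp T S)) := by
    intro hd
    have hsub : periodicSet (cosOp T S) ⊆ ({0} : Set F) := fun f hf => hper0 f hf
    have : cK ∈ closure (periodicSet (cosOp T S)) := hd cK
    have : cK ∈ closure ({0} : Set F) := closure_mono hsub this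
    rw [closure_singleton] at this
    have : cK = 0 := this
    rw [this, norm_zero] at hcKpos
    exact lt_irrefl _ hcKpos
  exact ⟨hnd, fun h => hnd h.2⟩
end

section
/- Let X be a topological space, let α : X → X be an aperiodic Borel measurable bijection with Borel measurable inverse, let F be a Banach function space on X satisfying condition Ω_α, and let w and 1/w both be weights on X. Suppose X has a compact subset K with ‖χ_K‖_F > 0. If the sequence (C^{(n)}_{α,w})_{n∈ℕ₀} is chaotic, then inf_{x∈X} w(x) ≤ 1 ≤ sup_{x∈X} w(x). -/
open Filter Topology

lemma periodic_eq_zero {F : Type*} [NormedAddCommGroup F] [NormedSpace ℂ F]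
    (T S : F →L[ℂ] F) (c : ℝ) (hc : 1 < c)
    (hTl : ∀ f : F, c * ‖f‖ ≤ ‖T f‖) (hSu : ∀ f : F, ‖S f‖ ≤ c⁻¹ * ‖f‖) :
    ∀ f ∈ periodicSet (cosOp T S), f = 0 := by
  have hc0 : (0:ℝ) < c := lt_trans one_pos hc
  have hci : c⁻¹ ≤ 1 := by
    rw [inv_le_one_iff₀]; right; exact hc.le
  have hTn : ∀ (n : ℕ) (f : F), c ^ n * ‖f‖ ≤ ‖(T ^ n) f‖ := by
    intro n
    induction n with
    | zero => intro f; simp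
    | succ n ih =>
      intro f
      have h1 : c * (c ^ n * ‖f‖) ≤ c * ‖(T ^ n) f‖ :=
        mul_le_mul_of_nonneg_left (ih f) hc0.le
      have h2 : c * ‖(T ^ n) f‖ ≤ ‖T ((T ^ n) f)‖ := hTl _
      have h3 : (T ^ (n+1)) f = T ((T ^ n) f) := by rw [pow_succ']; rfl
      calc c ^ (n+1) * ‖f‖ = c * (c ^ n * ‖f‖) := by ring
        _ ≤ c * ‖(T ^ n) f‖ := h1
        _ ≤ ‖T ((T ^ n) f)‖ := h2
        _ = ‖(T ^ (n+1)) f‖ := by rw [h3]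
  have hSn : ∀ (n : ℕ) (f : F), ‖(S ^ n) f‖ ≤ (c⁻¹) ^ n * ‖f‖ := by
    intro n
    induction n with
    | zero => intro f; simp
    | succ n ih =>
      intro f
      have h3 : (S ^ (n+1)) f = S ((S ^ n) f) := by rw [pow_succ']; rfl
      rw [h3]
      calc ‖S ((S ^ n) f)‖ ≤ c⁻¹ * ‖(S ^ n) f‖ := hSu _
        _ ≤ c⁻¹ * ((c⁻¹) ^ n * ‖f‖) :=
          mul_le_mul_of_nonneg_left (ih f) (by positivity)
        _ = (c⁻¹) ^ (n+1) * ‖f‖ := by ring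
  rintro f ⟨N, hN, hp⟩
  obtain ⟨m, hm⟩ : ∃ m : ℕ, (4:ℝ) < c ^ m := pow_unbounded_of_one_lt 4 hc
  set n := (m + 1) * N with hn
  have hmn : m ≤ n := le_trans (Nat.le_succ m) (Nat.le_mul_of_pos_right _ hN)
  have hcn : (4:ℝ) ≤ c ^ n := le_trans hm.le (pow_le_pow_right₀ hc.le hmn)
  have hper : cosOp T S n f = f := hp (m+1) (Nat.succ_pos m)
  have heq : (2:ℂ)⁻¹ • ((T ^ n) f + (S ^ n) f) = f := by
    have h : cosOp T S n f = (2:ℂ)⁻¹ • ((T ^ n) f + (S ^ n) f) := rfl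
    rw [← h, hper]
  have hnf : ‖f‖ = 2⁻¹ * ‖(T ^ n) f + (S ^ n) f‖ := by
    conv_lhs => rw [← heq]
    rw [norm_smul]
    norm_num
  have htri : ‖(T ^ n) f‖ ≤ ‖(T ^ n) f + (S ^ n) f‖ + ‖(S ^ n) f‖ := by
    have := norm_sub_le ((T ^ n) f + (S ^ n) f) ((S ^ n) f)
    simpa using this
  have hS1 : ‖(S ^ n) f‖ ≤ ‖f‖ := le_trans (hSn n f)
    (by nlinarith [pow_le_one₀ (by positivity : (0:ℝ) ≤ c⁻¹) hci (n := n), norm_nonneg f])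
  have hT1 : 4 * ‖f‖ ≤ ‖(T ^ n) f‖ :=
    le_trans (mul_le_mul_of_nonneg_right hcn (norm_nonneg f)) (hTn n f)
  have : ‖f‖ ≤ 0 := by nlinarith [norm_nonneg f]
  exact norm_le_zero_iff.mp this

/-- if the cosine operator sequence is chaotic then `inf w ≤ 1 ≤ sup w`. -/
theorem stmt4 {X : Type*} [TopologicalSpace X] [MeasurableSpace X] [BorelSpace X]
    {F : Type*} [NormedAddCommGroup F] [NormedSpace ℂ F] [CompleteSpace F]
    (B : BanachFunctionSpace X F) (α : X ≃ X)
    (hmα : Measurable (⇑α)) (hmαs : Measurable (⇑α.symm))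
    (hα : Aperiodic α) (hΩ : B.ConditionOmega α)
    (w : X → ℝ) (hw : IsWeightPair w) (T : F →L[ℂ] F)
    (hT : ∀ (f : F) (x : X), B.toFunL (T f) x = (w x : ℂ) * B.toFunL f (α x)) (S : F →L[ℂ] F) (hST : ∀ f : F, S (T f) = f) (hTS : ∀ f : F, T (S f) = f)
    (K : Set X) (hK : IsCompact K) (cK : F)
    (hcK : B.toFunL cK = Set.indicator K 1) (hcKpos : 0 < ‖cK‖)
    (hchaos : IsChaotic (cosOp T S)) :
    (⨅ x, w x) ≤ 1 ∧ 1 ≤ ⨆ x, w x := by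
  obtain ⟨hwm, ⟨Cw, hCw⟩, ⟨cw, hcw0, hcw⟩⟩ := hw
  have hcKne : cK ≠ 0 := by
    intro h; rw [h, norm_zero] at hcKpos; exact lt_irrefl _ hcKpos
  have hX : Nonempty X := by
    rcases isEmpty_or_nonempty X with h | h
    · refine absurd (B.injective ?_) hcKne
      funext x; exact (h.false x).elim
    · exact h
  have hwpos : ∀ x, 0 < w x := fun x => lt_of_lt_of_le hcw0 (hcw x)
  -- pointwise norm identities
  have hBT : ∀ (f : F) (x : X), ‖B.toFunL (T f) x‖ = w x * ‖B.toFunL f (α x)‖ := by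
    intro f x
    rw [hT f x, norm_mul, Complex.norm_real, Real.norm_of_nonneg (hwpos x).le]
  have hBS : ∀ (f : F) (y : X), w (α.symm y) * ‖B.toFunL (S f) y‖ = ‖B.toFunL f (α.symm y)‖ := by
    intro f y
    have h1 : B.toFunL (T (S f)) (α.symm y) = (w (α.symm y) : ℂ) * B.toFunL (S f) (α (α.symm y)) :=
      hT (S f) (α.symm y)
    rw [hTS f, Equiv.apply_symm_apply] at h1
    rw [h1, norm_mul, Complex.norm_real, Real.norm_of_nonneg (hwpos _).le]
  -- domination lemma from solidity
  have hdom : ∀ (u v : F) (r : ℝ), 0 ≤ r →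
      (∀ x, ‖B.toFunL u x‖ ≤ r * ‖B.toFunL v x‖) → ‖u‖ ≤ r * ‖v‖ := by
    intro u v r hr hb
    obtain ⟨g', hg', hng'⟩ := hΩ.1 ((r : ℂ) • v) (B.toFunL u) (B.measurable' u) (by
      intro x
      calc ‖B.toFunL u x‖ ≤ r * ‖B.toFunL v x‖ := hb x
        _ = ‖B.toFunL ((r : ℂ) • v) x‖ := by
            rw [map_smul, Pi.smul_apply, smul_eq_mul, norm_mul, Complex.norm_real,
              Real.norm_of_nonneg hr])
    have : g' = u := B.injective hg'
    rw [← this]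
    calc ‖g'‖ ≤ ‖(r : ℂ) • v‖ := hng'
      _ = r * ‖v‖ := by rw [norm_smul, Complex.norm_real, Real.norm_of_nonneg hr]
  -- the four operator-norm bounds
  have hTlow : ∀ c : ℝ, 0 < c → (∀ x, c ≤ w x) → ∀ f : F, c * ‖f‖ ≤ ‖T f‖ := by
    intro c hc0 hcb f
    obtain ⟨g, hg, hng⟩ := (hΩ.2.1 f).1
    have hb : ∀ x, ‖B.toFunL g x‖ ≤ c⁻¹ * ‖B.toFunL (T f) x‖ := by
      intro x
      rw [hg, hBT f x]
      show ‖B.toFunL f (α x)‖ ≤ _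
      calc ‖B.toFunL f (α x)‖ = c⁻¹ * (c * ‖B.toFunL f (α x)‖) := by field_simp
        _ ≤ c⁻¹ * (w x * ‖B.toFunL f (α x)‖) :=
          mul_le_mul_of_nonneg_left
            (mul_le_mul_of_nonneg_right (hcb x) (norm_nonneg _)) (by positivity)
    have := hdom g (T f) c⁻¹ (by positivity) hb
    rw [hng] at this
    calc c * ‖f‖ ≤ c * (c⁻¹ * ‖T f‖) := mul_le_mul_of_nonneg_left this hc0.le
      _ = ‖T f‖ := by field_simp
  have hTup : ∀ C : ℝ, 0 ≤ C → (∀ x, w x ≤ C) → ∀ f : F, ‖T f‖ ≤ C * ‖f‖ := by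
    intro C hC0 hCb f
    obtain ⟨g, hg, hng⟩ := (hΩ.2.1 f).1
    have hb : ∀ x, ‖B.toFunL (T f) x‖ ≤ C * ‖B.toFunL g x‖ := by
      intro x
      rw [hg, hBT f x]
      show _ ≤ C * ‖B.toFunL f (α x)‖
      exact mul_le_mul_of_nonneg_right (hCb x) (norm_nonneg _)
    have := hdom (T f) g C hC0 hb
    rwa [hng] at this
  have hSup : ∀ c : ℝ, 0 < c → (∀ x, c ≤ w x) → ∀ f : F, ‖S f‖ ≤ c⁻¹ * ‖f‖ := by
    intro c hc0 hcb f
    obtain ⟨g, hg, hng⟩ := (hΩ.2.1 f).2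
    have hb : ∀ y, ‖B.toFunL (S f) y‖ ≤ c⁻¹ * ‖B.toFunL g y‖ := by
      intro y
      have h1 := hBS f y
      have h2 : ‖B.toFunL g y‖ = ‖B.toFunL f (α.symm y)‖ := by rw [hg]; rfl
      rw [h2, ← h1]
      calc ‖B.toFunL (S f) y‖ = c⁻¹ * (c * ‖B.toFunL (S f) y‖) := by field_simp
        _ ≤ c⁻¹ * (w (α.symm y) * ‖B.toFunL (S f) y‖) :=
          mul_le_mul_of_nonneg_left
            (mul_le_mul_of_nonneg_right (hcb _) (norm_nonneg _)) (by positivity)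
    have := hdom (S f) g c⁻¹ (by positivity) hb
    rwa [hng] at this
  have hSlow : ∀ C : ℝ, 0 < C → (∀ x, w x ≤ C) → ∀ f : F, C⁻¹ * ‖f‖ ≤ ‖S f‖ := by
    intro C hC0 hCb f
    obtain ⟨g, hg, hng⟩ := (hΩ.2.1 f).2
    have hb : ∀ y, ‖B.toFunL g y‖ ≤ C * ‖B.toFunL (S f) y‖ := by
      intro y
      have h1 := hBS f y
      have h2 : ‖B.toFunL g y‖ = ‖B.toFunL f (α.symm y)‖ := by rw [hg]; rfl
      rw [h2, ← h1]
      exact mul_le_mul_of_nonneg_right (hCb _) (norm_nonneg _)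
    have := hdom g (S f) C hC0.le hb
    rw [hng] at this
    calc C⁻¹ * ‖f‖ ≤ C⁻¹ * (C * ‖S f‖) := mul_le_mul_of_nonneg_left this (by positivity)
      _ = ‖S f‖ := by field_simp
  -- from periodicSet ⊆ {0} and density, contradiction
  have hdense := hchaos.2
  have hcontra : ∀ (T' S' : F →L[ℂ] F), (∀ n, cosOp T' S' n = cosOp T S n) →
      ∀ c : ℝ, 1 < c → (∀ f : F, c * ‖f‖ ≤ ‖T' f‖) → (∀ f : F, ‖S' f‖ ≤ c⁻¹ * ‖f‖) → False := by
    intro T' S' hcos c hc hl hu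
    have hz := periodic_eq_zero T' S' c hc hl hu
    have hsub : periodicSet (cosOp T S) ⊆ {(0 : F)} := by
      intro f hf
      refine Set.mem_singleton_iff.mpr (hz f ?_)
      obtain ⟨N, hN, hp⟩ := hf
      exact ⟨N, hN, fun k hk => by rw [hcos]; exact hp k hk⟩
    have hd0 : Dense ({(0 : F)} : Set F) := hdense.mono hsub
    have := hd0.closure_eq
    rw [closure_singleton] at this
    exact hcKne (Set.eq_of_mem_singleton (this ▸ Set.mem_univ cK))
  constructor
  · by_contra hlt
    push_neg at hlt
    set c := ⨅ x, w x with hcdef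
    have hbdd : BddBelow (Set.range w) := ⟨cw, by rintro _ ⟨x, rfl⟩; exact hcw x⟩
    have hcb : ∀ x, c ≤ w x := fun x => ciInf_le hbdd x
    have hc0 : 0 < c := lt_trans one_pos hlt
    exact hcontra T S (fun n => rfl) c hlt (hTlow c hc0 hcb) (hSup c hc0 hcb)
  · by_contra hlt
    push_neg at hlt
    set C := ⨆ x, w x with hCdef
    have hbdd : BddAbove (Set.range w) := ⟨Cw, by rintro _ ⟨x, rfl⟩; exact hCw x⟩
    have hCb : ∀ x, w x ≤ C := fun x => le_ciSup hbdd x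
    have hC0 : 0 < C := lt_of_lt_of_le (hwpos hX.some) (hCb hX.some)
    refine hcontra S T (fun n => ?_) C⁻¹ ((one_lt_inv₀ hC0).mpr hlt)
      (hSlow C hC0 hCb) (fun f => by rw [inv_inv]; exact hTup C hC0.le hCb f)
    unfold cosOp
    rw [add_comm]
end

section
/- Let X be a topological space, let α : X → X be a bijection such that α and α⁻¹ are Borel measurable, let F be a Banach function space on X satisfying condition Ω_α, and let w and 1/w both be weights on X. Suppose that for each compact subset K ⊆ X there are sequences (D_k), (E_k), (F_k) of Borel subsets of K and a strictly increasing sequence (n_k) of positive integers such that for each k: D_k = E_k ∪ F_k, E_k ∩ F_k = ∅, lim_{k→∞} ‖χ_{K∖D_k}‖_F = 0, lim_{k→∞} ‖χ_{D_k} · ∏_{s=1}^{n_k} (w∘α^{−s})‖_F = lim_{k→∞} ‖χ_{D_k} · (∏_{s=0}^{n_k−1} (w∘α^{s}))^{−1}‖_F = 0, and lim_{k→∞} ‖χ_{E_k} · ∏_{s=1}^{2n_k} (w∘α^{−s})‖_F = lim_{k→∞} ‖χ_{F_k} · (∏_{s=0}^{2n_k−1} (w∘α^{s}))^{−1}‖_F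 = 0. Then the sequence (C^{(n)}_{α,w})_{n∈ℕ₀} is topologically transitive on F. -/
open Filter Topology

section StmtAux

variable {X : Type*} [TopologicalSpace X] [MeasurableSpace X]
  {F : Type*} [NormedAddCommGroup F] [NormedSpace ℂ F] [CompleteSpace F]

lemma myprod_reindex {M : Type*} [CommMonoid M] (α : X ≃ X) (v : X → M) (n : ℕ) (x : X) :
    ∏ s ∈ Finset.Icc 1 n, v ((⇑α.symm)^[s] ((⇑α)^[n] x)) = ∏ s ∈ Finset.range n, v ((⇑α)^[s] x) := by
  rw [← Finset.Ico_add_one_right_eq_Icc, Finset.prod_Ico_eq_prod_range]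
  simp only [Nat.add_sub_cancel]
  rw [← Finset.prod_range_reflect (fun s => v ((⇑α)^[s] x)) n]
  refine Finset.prod_congr rfl fun i hi => ?_
  simp only [Finset.mem_range] at hi
  congr 1
  have h1 : (⇑α)^[n] x = (⇑α)^[1+i] ((⇑α)^[n-1-i] x) := by
    rw [← Function.iterate_add_apply]; congr 1; omega
  rw [h1]
  exact Function.LeftInverse.iterate α.symm_apply_apply (1+i) _

lemma myprod_reindex' {M : Type*} [CommMonoid M] (α : X ≃ X) (v : X → M) (n : ℕ) (x : X) :
    ∏ s ∈ Finset.range n, v ((⇑α)^[s] ((⇑α.symm)^[n] x)) = ∏ s ∈ Finset.Icc 1 n, v ((⇑α.symm)^[s] x) := by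
  rw [← Finset.Ico_add_one_right_eq_Icc, Finset.prod_Ico_eq_prod_range]
  simp only [Nat.add_sub_cancel]
  rw [← Finset.prod_range_reflect (fun s => v ((⇑α.symm)^[1+s] x)) n]
  refine Finset.prod_congr rfl fun i hi => ?_
  simp only [Finset.mem_range] at hi
  have h2 : 1+(n-1-i) = n-i := by omega
  have h1 : (⇑α.symm)^[n] x = (⇑α.symm)^[i] ((⇑α.symm)^[n-i] x) := by
    rw [← Function.iterate_add_apply]; congr 1; omega
  rw [h2, h1, Function.LeftInverse.iterate α.apply_symm_apply i _]

lemma aux_ind_norm_le (s : Set X) (f : X → ℂ) (x : X) : ‖Set.indicator s f x‖ ≤ ‖f x‖ := by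
  classical
  rw [Set.indicator_apply]
  split_ifs
  · exact le_refl _
  · simp

lemma aux_solid_scaled (B : BanachFunctionSpace X F) (hsolid : B.IsSolid) (a : F) (g : X → ℂ)
    (hg : Measurable g) (M : ℝ) (hM : 0 ≤ M) (h : ∀ x, ‖g x‖ ≤ M * ‖B.toFunL a x‖) :
    ∃ g' : F, B.toFunL g' = g ∧ ‖g'‖ ≤ M * ‖a‖ := by
  obtain ⟨g', hg', hn⟩ := hsolid ((M : ℂ) • a) g hg (fun x => by
    rw [map_smul]
    simp only [Pi.smul_apply, norm_smul, Complex.norm_real, Real.norm_eq_abs, abs_of_nonneg hM]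
    exact h x)
  refine ⟨g', hg', hn.trans_eq ?_⟩
  rw [norm_smul]
  simp [abs_of_nonneg hM]

lemma aux_norm_le (B : BanachFunctionSpace X F) (hsolid : B.IsSolid) (u a : F) (M : ℝ)
    (hM : 0 ≤ M) (h : ∀ x, ‖B.toFunL u x‖ ≤ M * ‖B.toFunL a x‖) : ‖u‖ ≤ M * ‖a‖ := by
  obtain ⟨g', hg', hn⟩ := aux_solid_scaled B hsolid a (B.toFunL u) (B.measurable' u) M hM h
  rwa [B.injective hg'] at hn

lemma aux_inv_iter (B : BanachFunctionSpace X F) {α : X ≃ X} (hinv : B.IsInvariant α)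
    (f : F) (n : ℕ) :
    ∃ g : F, B.toFunL g = B.toFunL f ∘ (⇑α)^[n] ∧ ‖g‖ = ‖f‖ := by
  induction n with
  | zero => exact ⟨f, by simp, rfl⟩
  | succ n ih =>
    obtain ⟨g, hg, hn⟩ := ih
    obtain ⟨g', hg', hn'⟩ := (hinv g).1
    exact ⟨g', by rw [hg', hg, Function.iterate_succ]; rfl, hn'.trans hn⟩

lemma aux_inv_iter_symm (B : BanachFunctionSpace X F) {α : X ≃ X} (hinv : B.IsInvariant α)
    (f : F) (n : ℕ) :
    ∃ g : F, B.toFunL g = B.toFunL f ∘ (⇑α.symm)^[n] ∧ ‖g‖ = ‖f‖ := by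
  induction n with
  | zero => exact ⟨f, by simp, rfl⟩
  | succ n ih =>
    obtain ⟨g, hg, hn⟩ := ih
    obtain ⟨g', hg', hn'⟩ := (hinv g).2
    exact ⟨g', by rw [hg', hg, Function.iterate_succ]; rfl, hn'.trans hn⟩

lemma aux_norm_le_comp (B : BanachFunctionSpace X F) (hsolid : B.IsSolid) {α : X ≃ X}
    (hinv : B.IsInvariant α) (u a : F) (M : ℝ) (hM : 0 ≤ M) (n : ℕ)
    (h : ∀ x, ‖B.toFunL u x‖ ≤ M * ‖B.toFunL a ((⇑α)^[n] x)‖) : ‖u‖ ≤ M * ‖a‖ := by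
  obtain ⟨a', ha', hna⟩ := aux_inv_iter B hinv a n
  rw [← hna]
  exact aux_norm_le B hsolid u a' M hM (fun x => by rw [ha']; exact h x)

lemma aux_norm_le_comp_symm (B : BanachFunctionSpace X F) (hsolid : B.IsSolid) {α : X ≃ X}
    (hinv : B.IsInvariant α) (u a : F) (M : ℝ) (hM : 0 ≤ M) (n : ℕ)
    (h : ∀ x, ‖B.toFunL u x‖ ≤ M * ‖B.toFunL a ((⇑α.symm)^[n] x)‖) : ‖u‖ ≤ M * ‖a‖ := by
  obtain ⟨a', ha', hna⟩ := aux_inv_iter_symm B hinv a n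
  rw [← hna]
  exact aux_norm_le B hsolid u a' M hM (fun x => by rw [ha']; exact h x)

lemma powT_apply (B : BanachFunctionSpace X F) (α : X ≃ X) (w : X → ℝ) (T : F →L[ℂ] F)
    (hT : ∀ (f : F) (x : X), B.toFunL (T f) x = (w x : ℂ) * B.toFunL f (α x))
    (n : ℕ) (f : F) (x : X) :
    B.toFunL ((T^n) f) x
      = (∏ s ∈ Finset.range n, (w ((⇑α)^[s] x):ℂ)) * B.toFunL f ((⇑α)^[n] x) := by
  induction n generalizing f with
  | zero => simp
  | succ n ih =>
    rw [pow_succ, ContinuousLinearMap.mul_apply, ih (T f), hT,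
      Finset.prod_range_succ, Function.iterate_succ_apply']
    ring

lemma S_apply (B : BanachFunctionSpace X F) (α : X ≃ X) (w : X → ℝ) (T S : F →L[ℂ] F)
    (hT : ∀ (f : F) (x : X), B.toFunL (T f) x = (w x : ℂ) * B.toFunL f (α x))
    (hTS : ∀ f : F, T (S f) = f) (hwpos : ∀ x, 0 < w x) (f : F) (x : X) :
    B.toFunL (S f) x = (w (α.symm x) : ℂ)⁻¹ * B.toFunL f (α.symm x) := by
  have h := hT (S f) (α.symm x)
  rw [hTS, Equiv.apply_symm_apply] at h
  have hne : (w (α.symm x) : ℂ) ≠ 0 := by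
    exact_mod_cast (hwpos (α.symm x)).ne'
  field_simp [h]
  rw [h]; ring

lemma powS_apply (B : BanachFunctionSpace X F) (α : X ≃ X) (w : X → ℝ) (T S : F →L[ℂ] F)
    (hT : ∀ (f : F) (x : X), B.toFunL (T f) x = (w x : ℂ) * B.toFunL f (α x))
    (hTS : ∀ f : F, T (S f) = f) (hwpos : ∀ x, 0 < w x) (n : ℕ) (f : F) (x : X) :
    B.toFunL ((S^n) f) x =
      (∏ s ∈ Finset.Icc 1 n, (w ((⇑α.symm)^[s] x):ℂ))⁻¹ * B.toFunL f ((⇑α.symm)^[n] x) := by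
  induction n generalizing f with
  | zero => simp
  | succ n ih =>
    rw [pow_succ, ContinuousLinearMap.mul_apply, ih (S f),
      S_apply B α w T S hT hTS hwpos,
      Finset.prod_Icc_succ_top (Nat.one_le_iff_ne_zero.mpr (Nat.succ_ne_zero n)),
      Function.iterate_succ_apply', mul_inv]
    ring

lemma powTS {F : Type*} [NormedAddCommGroup F] [NormedSpace ℂ F] (T S : F →L[ℂ] F)
    (hTS : ∀ f : F, T (S f) = f) (n : ℕ) (u : F) : (T^n) ((S^n) u) = u := by
  induction n with
  | zero => simp
  | succ n ih =>
    rw [pow_succ, pow_succ', ContinuousLinearMap.mul_apply, ContinuousLinearMap.mul_apply,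
      hTS, ih]

lemma powST {F : Type*} [NormedAddCommGroup F] [NormedSpace ℂ F] (T S : F →L[ℂ] F)
    (hST : ∀ f : F, S (T f) = f) (n : ℕ) (u : F) : (S^n) ((T^n) u) = u := by
  induction n with
  | zero => simp
  | succ n ih =>
    rw [pow_succ, pow_succ', ContinuousLinearMap.mul_apply, ContinuousLinearMap.mul_apply,
      hST, ih]

lemma aux_diff (B : BanachFunctionSpace X F) (hsolid : B.IsSolid) (f u gk : F)
    (K Dset : Set X) (M : ℝ) (hM : 0 ≤ M)
    (hfM : ∀ x, ‖B.toFunL f x‖ ≤ M) (hfK : ∀ x ∉ K, B.toFunL f x = 0)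
    (hu : B.toFunL u = Set.indicator Dset (B.toFunL f))
    (hg : B.toFunL gk = Set.indicator (K \ Dset) 1) :
    ‖f - u‖ ≤ M * ‖gk‖ := by
  refine aux_norm_le B hsolid _ gk M hM (fun x => ?_)
  rw [map_sub, Pi.sub_apply, hu, hg]
  by_cases hxD : x ∈ Dset
  · rw [Set.indicator_of_mem hxD, sub_self, norm_zero]
    positivity
  · rw [Set.indicator_of_notMem hxD, sub_zero]
    by_cases hxK : x ∈ K
    · rw [Set.indicator_of_mem (Set.mem_diff_of_mem hxK hxD), Pi.one_apply, norm_one, mul_one]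
      exact hfM x
    · rw [hfK x hxK, norm_zero]
      positivity

lemma aux_Tbound (B : BanachFunctionSpace X F) (α : X ≃ X) (w : X → ℝ) (T : F →L[ℂ] F)
    (hsolid : B.IsSolid) (hinv : B.IsInvariant α)
    (hT : ∀ (f : F) (x : X), B.toFunL (T f) x = (w x : ℂ) * B.toFunL f (α x))
    (hwpos : ∀ x, 0 < w x) (m : ℕ) (A Dset : Set X) (hAD : A ⊆ Dset) (f' u h : F)
    (M : ℝ) (hM : 0 ≤ M) (hfM : ∀ x, ‖B.toFunL f' x‖ ≤ M)
    (hu : B.toFunL u = Set.indicator A (B.toFunL f'))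
    (hh : B.toFunL h = Set.indicator Dset
      (fun x => ((∏ s ∈ Finset.Icc 1 m, w ((⇑α.symm)^[s] x) : ℝ) : ℂ))) :
    ‖(T^m) u‖ ≤ M * ‖h‖ := by
  refine aux_norm_le_comp B hsolid hinv _ h M hM m (fun x => ?_)
  rw [powT_apply B α w T hT m u x, hu, hh]
  by_cases hy : (⇑α)^[m] x ∈ A
  · rw [Set.indicator_of_mem hy, Set.indicator_of_mem (hAD hy)]
    have hP : (0:ℝ) < ∏ s ∈ Finset.range m, w ((⇑α)^[s] x) :=
      Finset.prod_pos fun i _ => hwpos _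
    have hQ : (∏ s ∈ Finset.Icc 1 m, w ((⇑α.symm)^[s] ((⇑α)^[m] x)))
        = ∏ s ∈ Finset.range m, w ((⇑α)^[s] x) := myprod_reindex α w m x
    have hcast : (∏ s ∈ Finset.range m, (w ((⇑α)^[s] x):ℂ))
        = ((∏ s ∈ Finset.range m, w ((⇑α)^[s] x) : ℝ) : ℂ) := by push_cast; rfl
    rw [hcast, norm_mul, hQ, Complex.norm_real, Real.norm_eq_abs, abs_of_pos hP, mul_comm M]
    exact mul_le_mul_of_nonneg_left (hfM _) hP.le
  · rw [Set.indicator_of_notMem hy, mul_zero, norm_zero]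
    positivity

lemma aux_Sbound (B : BanachFunctionSpace X F) (α : X ≃ X) (w : X → ℝ) (T S : F →L[ℂ] F)
    (hsolid : B.IsSolid) (hinv : B.IsInvariant α)
    (hT : ∀ (f : F) (x : X), B.toFunL (T f) x = (w x : ℂ) * B.toFunL f (α x))
    (hTS : ∀ f : F, T (S f) = f)
    (hwpos : ∀ x, 0 < w x) (m : ℕ) (A Dset : Set X) (hAD : A ⊆ Dset) (f' u h : F)
    (M : ℝ) (hM : 0 ≤ M) (hfM : ∀ x, ‖B.toFunL f' x‖ ≤ M)
    (hu : B.toFunL u = Set.indicator A (B.toFunL f'))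
    (hh : B.toFunL h = Set.indicator Dset
      (fun x => (((∏ s ∈ Finset.range m, w ((⇑α)^[s] x))⁻¹ : ℝ) : ℂ))) :
    ‖(S^m) u‖ ≤ M * ‖h‖ := by
  refine aux_norm_le_comp_symm B hsolid hinv _ h M hM m (fun x => ?_)
  rw [powS_apply B α w T S hT hTS hwpos m u x, hu, hh]
  by_cases hy : (⇑α.symm)^[m] x ∈ A
  · rw [Set.indicator_of_mem hy, Set.indicator_of_mem (hAD hy)]
    have hP : (0:ℝ) < ∏ s ∈ Finset.Icc 1 m, w ((⇑α.symm)^[s] x) :=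
      Finset.prod_pos fun i _ => hwpos _
    have hQ : (∏ s ∈ Finset.range m, w ((⇑α)^[s] ((⇑α.symm)^[m] x)))
        = ∏ s ∈ Finset.Icc 1 m, w ((⇑α.symm)^[s] x) := myprod_reindex' α w m x
    have hcast : (∏ s ∈ Finset.Icc 1 m, (w ((⇑α.symm)^[s] x):ℂ))⁻¹
        = (((∏ s ∈ Finset.Icc 1 m, w ((⇑α.symm)^[s] x))⁻¹ : ℝ) : ℂ) := by push_cast; rfl
    rw [hcast, norm_mul, hQ, Complex.norm_real, Real.norm_eq_abs,
      abs_of_pos (inv_pos.mpr hP), mul_comm M]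
    exact mul_le_mul_of_nonneg_left (hfM _) (inv_pos.mpr hP).le
  · rw [Set.indicator_of_notMem hy, mul_zero, norm_zero]
    positivity

end StmtAux

set_option maxHeartbeats 2000000
/-- sufficient condition for topological transitivity of the cosine operator
sequence. -/
theorem stmt5 {X : Type*} [TopologicalSpace X] [MeasurableSpace X] [BorelSpace X]
    {F : Type*} [NormedAddCommGroup F] [NormedSpace ℂ F] [CompleteSpace F]
    (B : BanachFunctionSpace X F) (α : X ≃ X)
    (hmα : Measurable (⇑α)) (hmαs : Measurable (⇑α.symm))
    (hΩ : B.ConditionOmega α)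
    (w : X → ℝ) (hw : IsWeightPair w) (T : F →L[ℂ] F)
    (hT : ∀ (f : F) (x : X), B.toFunL (T f) x = (w x : ℂ) * B.toFunL f (α x)) (S : F →L[ℂ] F) (hST : ∀ f : F, S (T f) = f) (hTS : ∀ f : F, T (S f) = f)
    (hcond : ∀ K : Set X, IsCompact K →
      ∃ (D E' F' : ℕ → Set X) (nk : ℕ → ℕ) (g h₁ h₂ h₃ h₄ : ℕ → F),
        (∀ k, MeasurableSet (D k) ∧ MeasurableSet (E' k) ∧ MeasurableSet (F' k)) ∧
        (∀ k, D k ⊆ K) ∧ (∀ k, E' k ⊆ K) ∧ (∀ k, F' k ⊆ K) ∧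
        (∀ k, D k = E' k ∪ F' k) ∧ (∀ k, E' k ∩ F' k = ∅) ∧
        StrictMono nk ∧ (∀ k, 0 < nk k) ∧
        (∀ k, B.toFunL (g k) = Set.indicator (K \ D k) 1) ∧
        Tendsto (fun k => ‖g k‖) atTop (𝓝 0) ∧
        (∀ k, B.toFunL (h₁ k) = Set.indicator (D k)
          (fun x => ((∏ s ∈ Finset.Icc 1 (nk k), w ((⇑α.symm)^[s] x) : ℝ) : ℂ))) ∧
        Tendsto (fun k => ‖h₁ k‖) atTop (𝓝 0) ∧
        (∀ k, B.toFunL (h₂ k) = Set.indicator (D k)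
          (fun x => (((∏ s ∈ Finset.range (nk k), w ((⇑α)^[s] x))⁻¹ : ℝ) : ℂ))) ∧
        Tendsto (fun k => ‖h₂ k‖) atTop (𝓝 0) ∧
        (∀ k, B.toFunL (h₃ k) = Set.indicator (E' k)
          (fun x => ((∏ s ∈ Finset.Icc 1 (2 * nk k), w ((⇑α.symm)^[s] x) : ℝ) : ℂ))) ∧
        Tendsto (fun k => ‖h₃ k‖) atTop (𝓝 0) ∧
        (∀ k, B.toFunL (h₄ k) = Set.indicator (F' k)
          (fun x => (((∏ s ∈ Finset.range (2 * nk k), w ((⇑α)^[s] x))⁻¹ : ℝ) : ℂ))) ∧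
        Tendsto (fun k => ‖h₄ k‖) atTop (𝓝 0)) :
    TopTransitive (cosOp T S) := by
  classical
  obtain ⟨hsolid, hinv, hci, hdense⟩ := hΩ
  obtain ⟨hwmeas, ⟨Cw, hCw⟩, cw, hcw, hcwle⟩ := hw
  have hwpos : ∀ x, 0 < w x := fun x => lt_of_lt_of_le hcw (hcwle x)
  intro U V hU hV hUne hVne
  obtain ⟨f, ⟨⟨Mf, hMf⟩, Kf, hKf, hKf0⟩, hfU⟩ := hdense.exists_mem_open hU hUne
  obtain ⟨f', ⟨⟨Mf', hMf'⟩, Kf', hKf', hKf0'⟩, hfV⟩ := hdense.exists_mem_open hV hVne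
  set M : ℝ := max (max Mf Mf') 0 with hMdef
  have hM0 : 0 ≤ M := le_max_right _ _
  have hfM : ∀ x, ‖B.toFunL f x‖ ≤ M :=
    fun x => (hMf x).trans (le_max_of_le_left (le_max_left _ _))
  have hfM' : ∀ x, ‖B.toFunL f' x‖ ≤ M :=
    fun x => (hMf' x).trans (le_max_of_le_left (le_max_right _ _))
  obtain ⟨ε, hε, hball⟩ := Metric.isOpen_iff.mp hU f hfU
  obtain ⟨ε', hε', hball'⟩ := Metric.isOpen_iff.mp hV f' hfV
  have hKcomp : IsCompact (Kf ∪ Kf') := hKf.union hKf'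
  obtain ⟨D, E', F', nk, g, h₁, h₂, h₃, h₄, hmeas, hDK, hEK, hFK, hDEF, hEF, hmono, hnkpos,
    hg, hgl, hh₁, hh₁l, hh₂, hh₂l, hh₃, hh₃l, hh₄, hh₄l⟩ := hcond _ hKcomp
  set δ : ℝ := min ε ε' / (6 * (M + 1)) with hδdef
  have hminpos : 0 < min ε ε' := lt_min hε hε'
  have hδ : 0 < δ := by positivity
  obtain ⟨k, hk0, hk1, hk2, hk3, hk4⟩ :=
    ((hgl.eventually_lt_const hδ).and ((hh₁l.eventually_lt_const hδ).and
      ((hh₂l.eventually_lt_const hδ).and ((hh₃l.eventually_lt_const hδ).and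
        (hh₄l.eventually_lt_const hδ))))).exists
  set n := nk k with hndef
  have hn : 0 < n := hnkpos k
  have hED : E' k ⊆ D k := (hDEF k) ▸ Set.subset_union_left
  have hFD : F' k ⊆ D k := (hDEF k) ▸ Set.subset_union_right
  obtain ⟨uD, huD, -⟩ := hsolid f (Set.indicator (D k) (B.toFunL f))
    ((B.measurable' f).indicator (hmeas k).1) (fun x => aux_ind_norm_le _ _ _)
  obtain ⟨uE, huE, -⟩ := hsolid f' (Set.indicator (E' k) (B.toFunL f'))
    ((B.measurable' f').indicator (hmeas k).2.1) (fun x => aux_ind_norm_le _ _ _)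
  obtain ⟨uF, huF, -⟩ := hsolid f' (Set.indicator (F' k) (B.toFunL f'))
    ((B.measurable' f').indicator (hmeas k).2.2) (fun x => aux_ind_norm_le _ _ _)
  set z : F := uD + (2:ℂ) • ((T^n) uE) + (2:ℂ) • ((S^n) uF) with hzdef
  have hfK0 : ∀ x ∉ Kf ∪ Kf', B.toFunL f x = 0 := fun x hx => hKf0 x (fun h => hx (Or.inl h))
  have hfK0' : ∀ x ∉ Kf ∪ Kf', B.toFunL f' x = 0 := fun x hx => hKf0' x (fun h => hx (Or.inr h))
  have bd_a : ‖f - uD‖ ≤ M * ‖g k‖ :=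
    aux_diff B hsolid f uD (g k) _ (D k) M hM0 hfM hfK0 huD (hg k)
  have bd_b : ‖(T^n) uE‖ ≤ M * ‖h₁ k‖ :=
    aux_Tbound B α w T hsolid hinv hT hwpos n (E' k) (D k) hED f' uE (h₁ k) M hM0 hfM' huE (hh₁ k)
  have bd_c : ‖(S^n) uF‖ ≤ M * ‖h₂ k‖ :=
    aux_Sbound B α w T S hsolid hinv hT hTS hwpos n (F' k) (D k) hFD f' uF (h₂ k) M hM0 hfM'
      huF (hh₂ k)
  have bd_d : ‖(T^n) uD‖ ≤ M * ‖h₁ k‖ :=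
    aux_Tbound B α w T hsolid hinv hT hwpos n (D k) (D k) subset_rfl f uD (h₁ k) M hM0 hfM
      huD (hh₁ k)
  have bd_e : ‖(S^n) uD‖ ≤ M * ‖h₂ k‖ :=
    aux_Sbound B α w T S hsolid hinv hT hTS hwpos n (D k) (D k) subset_rfl f uD (h₂ k) M hM0 hfM
      huD (hh₂ k)
  have bd_f : ‖(T^(2*n)) uE‖ ≤ M * ‖h₃ k‖ :=
    aux_Tbound B α w T hsolid hinv hT hwpos (2*n) (E' k) (E' k) subset_rfl f' uE (h₃ k) M hM0
      hfM' huE (hh₃ k)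
  have bd_g : ‖(S^(2*n)) uF‖ ≤ M * ‖h₄ k‖ :=
    aux_Sbound B α w T S hsolid hinv hT hTS hwpos (2*n) (F' k) (F' k) subset_rfl f' uF (h₄ k)
      M hM0 hfM' huF (hh₄ k)
  have huEF : B.toFunL (uE + uF) = Set.indicator (D k) (B.toFunL f') := by
    have hdisj : Disjoint (E' k) (F' k) := Set.disjoint_iff_inter_eq_empty.mpr (hEF k)
    rw [map_add, huE, huF, hDEF k, Set.indicator_union_of_disjoint hdisj]
    rfl
  have bd_h : ‖f' - (uE + uF)‖ ≤ M * ‖g k‖ :=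
    aux_diff B hsolid f' (uE + uF) (g k) _ (D k) M hM0 hfM' hfK0' huEF (hg k)
  have hTT : (T^n) ((T^n) uE) = (T^(2*n)) uE := by
    rw [← ContinuousLinearMap.mul_apply, ← pow_add, two_mul]
  have hSS : (S^n) ((S^n) uF) = (S^(2*n)) uF := by
    rw [← ContinuousLinearMap.mul_apply, ← pow_add, two_mul]
  have key : cosOp T S n z = (2:ℂ)⁻¹ • ((T^n) uD) + (2:ℂ)⁻¹ • ((S^n) uD)
      + ((T^(2*n)) uE + uE + (uF + (S^(2*n)) uF)) := by
    simp only [cosOp, hzdef, ContinuousLinearMap.smul_apply, ContinuousLinearMap.add_apply,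
      map_add, map_smul]
    rw [hTT, hSS, powST T S hST n uE, powTS T S hTS n uF]
    module
  have h2s : ∀ v : F, ‖(2:ℂ) • v‖ = 2 * ‖v‖ := fun v => by
    rw [norm_smul]; norm_num
  have h2inv : ∀ v : F, ‖(2:ℂ)⁻¹ • v‖ ≤ ‖v‖ := fun v => by
    rw [norm_smul]
    have : ‖(2:ℂ)⁻¹‖ = 2⁻¹ := by norm_num
    rw [this]
    nlinarith [norm_nonneg v]
  have hδ6 : 6 * (M + 1) * δ = min ε ε' := by
    rw [hδdef]; field_simp
  have hzU : z ∈ U := by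
    apply hball
    rw [Metric.mem_ball, dist_eq_norm]
    have hzf : z - f = (uD - f) + (2:ℂ) • ((T^n) uE) + (2:ℂ) • ((S^n) uF) := by
      rw [hzdef]; abel
    have t1 : ‖z - f‖ ≤ ‖uD - f‖ + ‖(2:ℂ) • ((T^n) uE)‖ + ‖(2:ℂ) • ((S^n) uF)‖ := by
      rw [hzf]; exact norm_add₃_le
    rw [h2s, h2s, norm_sub_rev uD f] at t1
    have hle : min ε ε' ≤ ε := min_le_left _ _
    nlinarith [mul_le_mul_of_nonneg_left hk0.le hM0, mul_le_mul_of_nonneg_left hk1.le hM0,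
      mul_le_mul_of_nonneg_left hk2.le hM0, mul_nonneg hM0 hδ.le]
  have hCzV : cosOp T S n z ∈ V := by
    apply hball'
    rw [Metric.mem_ball, dist_eq_norm]
    have hCz : cosOp T S n z - f' = (2:ℂ)⁻¹ • ((T^n) uD) + (2:ℂ)⁻¹ • ((S^n) uD)
        + (T^(2*n)) uE + (S^(2*n)) uF + ((uE + uF) - f') := by
      rw [key]; abel
    have t1 : ‖cosOp T S n z - f'‖ ≤ ‖(2:ℂ)⁻¹ • ((T^n) uD)‖ + ‖(2:ℂ)⁻¹ • ((S^n) uD)‖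
        + ‖(T^(2*n)) uE‖ + ‖(S^(2*n)) uF‖ + ‖(uE + uF) - f'‖ := by
      rw [hCz]
      calc ‖(2:ℂ)⁻¹ • ((T^n) uD) + (2:ℂ)⁻¹ • ((S^n) uD) + (T^(2*n)) uE + (S^(2*n)) uF
            + ((uE + uF) - f')‖
          ≤ ‖(2:ℂ)⁻¹ • ((T^n) uD) + (2:ℂ)⁻¹ • ((S^n) uD) + (T^(2*n)) uE + (S^(2*n)) uF‖
            + ‖(uE + uF) - f'‖ := norm_add_le _ _
        _ ≤ (‖(2:ℂ)⁻¹ • ((T^n) uD) + (2:ℂ)⁻¹ • ((S^n) uD) + (T^(2*n)) uE‖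
            + ‖(S^(2*n)) uF‖) + ‖(uE + uF) - f'‖ :=
            add_le_add_left (norm_add_le _ _) _
        _ ≤ ((‖(2:ℂ)⁻¹ • ((T^n) uD)‖ + ‖(2:ℂ)⁻¹ • ((S^n) uD)‖ + ‖(T^(2*n)) uE‖)
            + ‖(S^(2*n)) uF‖) + ‖(uE + uF) - f'‖ :=
            add_le_add_left (add_le_add_left norm_add₃_le _) _
        _ = _ := by ring
    rw [norm_sub_rev (uE + uF) f'] at t1
    have hle : min ε ε' ≤ ε' := min_le_right _ _
    nlinarith [h2inv ((T^n) uD), h2inv ((S^n) uD),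
      mul_le_mul_of_nonneg_left hk0.le hM0, mul_le_mul_of_nonneg_left hk1.le hM0,
      mul_le_mul_of_nonneg_left hk2.le hM0, mul_le_mul_of_nonneg_left hk3.le hM0,
      mul_le_mul_of_nonneg_left hk4.le hM0, mul_nonneg hM0 hδ.le,
      norm_nonneg ((T^n) uD), norm_nonneg ((S^n) uD)]
  exact ⟨n, hn, ⟨cosOp T S n z, ⟨z, hzU, rfl⟩, hCzV⟩⟩
end

section
/- Let X be a topological space, let α : X → X be a bijection such that α and α⁻¹ are Borel measurable, let F be a Banach function space on X satisfying condition Ω_α, and let w and 1/w both be weights on X. Suppose that for each compact subset K ⊆ X there exist a sequence (D_k)_{k=1}^∞ of Borel subsets of K and a strictly increasing sequence (n_k) of positive integers such that lim_{k→∞} ‖χ_{K∖D_k}‖_F = 0 and, the series below being convergent for each k, lim_{k→∞} Σ_{l=1}^∞ ‖χ_{D_k} · ∏_{s=1}^{l·n_k} (w∘α^{−s})‖_F = lim_{k→∞} Σ_{l=1}^∞ ‖χ_{D_k} · (∏_{s=0}^{l·n_k−1} (w∘α^{s}))^{−1}‖_F = 0. Then the sequence (C^{(n)}_{α,w})_{n∈ℕ₀}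 is chaotic on F. -/
open Filter Topology

private lemma prod_range_sub_aux {M : Type*} [CommMonoid M] (g : ℕ → M) (n : ℕ) :
    ∏ s ∈ Finset.range n, g (n - s) = ∏ t ∈ Finset.Icc 1 n, g t := by
  refine Finset.prod_nbij' (fun s => n - s) (fun t => n - t) ?_ ?_ ?_ ?_ ?_
  · intro a ha; simp only [Finset.mem_range] at ha; simp only [Finset.mem_Icc]; omega
  · intro a ha; simp only [Finset.mem_Icc] at ha; simp only [Finset.mem_range]; omega
  · intro a ha; simp only [Finset.mem_range] at ha; show n - (n - a) = a; omega
  · intro a ha; simp only [Finset.mem_Icc] at ha; show n - (n - a) = a; omega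
  · intro a _; rfl

private lemma prod_Icc_sub_aux {M : Type*} [CommMonoid M] (g : ℕ → M) (n : ℕ) :
    ∏ s ∈ Finset.Icc 1 n, g (n - s) = ∏ t ∈ Finset.range n, g t := by
  refine Finset.prod_nbij' (fun s => n - s) (fun t => n - t) ?_ ?_ ?_ ?_ ?_
  · intro a ha; simp only [Finset.mem_Icc] at ha; simp only [Finset.mem_range]; omega
  · intro a ha; simp only [Finset.mem_range] at ha; simp only [Finset.mem_Icc]; omega
  · intro a ha; simp only [Finset.mem_Icc] at ha; show n - (n - a) = a; omega
  · intro a ha; simp only [Finset.mem_range] at ha; show n - (n - a) = a; omega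
  · intro a _; rfl

set_option maxHeartbeats 2000000

/-- sufficient condition for the cosine operator sequence to be chaotic. -/
theorem stmt6 {X : Type*} [TopologicalSpace X] [MeasurableSpace X] [BorelSpace X]
    {F : Type*} [NormedAddCommGroup F] [NormedSpace ℂ F] [CompleteSpace F]
    (B : BanachFunctionSpace X F) (α : X ≃ X)
    (hmα : Measurable (⇑α)) (hmαs : Measurable (⇑α.symm))
    (hΩ : B.ConditionOmega α)
    (w : X → ℝ) (hw : IsWeightPair w) (T : F →L[ℂ] F)
    (hT : ∀ (f : F) (x : X), B.toFunL (T f) x = (w x : ℂ) * B.toFunL f (α x)) (S : F →L[ℂ] F) (hST : ∀ f : F, S (T f) = f) (hTS : ∀ f : F, T (S f) = f)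
    (hcond : ∀ K : Set X, IsCompact K →
      ∃ (D : ℕ → Set X) (nk : ℕ → ℕ) (g : ℕ → F) (a b : ℕ → ℕ → F),
        (∀ k, MeasurableSet (D k)) ∧ (∀ k, D k ⊆ K) ∧
        StrictMono nk ∧ (∀ k, 0 < nk k) ∧
        (∀ k, B.toFunL (g k) = Set.indicator (K \ D k) 1) ∧
        Tendsto (fun k => ‖g k‖) atTop (𝓝 0) ∧
        (∀ k l, B.toFunL (a k l) = Set.indicator (D k)
          (fun x => ((∏ s ∈ Finset.Icc 1 ((l + 1) * nk k), w ((⇑α.symm)^[s] x) : ℝ) : ℂ))) ∧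
        (∀ k, Summable fun l => ‖a k l‖) ∧
        Tendsto (fun k => ∑' l, ‖a k l‖) atTop (𝓝 0) ∧
        (∀ k l, B.toFunL (b k l) = Set.indicator (D k)
          (fun x => (((∏ s ∈ Finset.range ((l + 1) * nk k), w ((⇑α)^[s] x))⁻¹ : ℝ) : ℂ))) ∧
        (∀ k, Summable fun l => ‖b k l‖) ∧
        Tendsto (fun k => ∑' l, ‖b k l‖) atTop (𝓝 0)) :
    IsChaotic (cosOp T S) := by
  classical
  obtain ⟨hsolid, hinv, hci, hdense⟩ := hΩ
  obtain ⟨hwm, ⟨Cw, hCw⟩, c, hc, hcw⟩ := hw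
  have hwpos : ∀ x, 0 < w x := fun x => lt_of_lt_of_le hc (hcw x)
  have hwne : ∀ x, (w x : ℂ) ≠ 0 := fun x => by
    exact_mod_cast (hwpos x).ne'
  -- the formula for S
  have hS : ∀ (f : F) (x : X),
      B.toFunL (S f) x = (w (α.symm x) : ℂ)⁻¹ * B.toFunL f (α.symm x) := by
    intro f x
    have h1 := hT (S f) (α.symm x)
    rw [hTS, Equiv.apply_symm_apply] at h1
    rw [h1, inv_mul_cancel_left₀ (hwne _)]
  -- iterated formula for T
  have hTn : ∀ (n : ℕ) (f : F) (x : X),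
      B.toFunL ((T ^ n) f) x
        = (∏ s ∈ Finset.range n, (w ((⇑α)^[s] x) : ℂ)) * B.toFunL f ((⇑α)^[n] x) := by
    intro n
    induction n with
    | zero => intro f x; simp
    | succ n ih =>
      intro f x
      rw [pow_succ, ContinuousLinearMap.mul_apply, ih (T f) x, hT f ((⇑α)^[n] x),
        Finset.prod_range_succ, Function.iterate_succ_apply']
      ring
  -- iterated formula for S
  have hSn : ∀ (n : ℕ) (f : F) (x : X),
      B.toFunL ((S ^ n) f) x
        = (∏ s ∈ Finset.Icc 1 n, (w ((⇑α.symm)^[s] x) : ℂ))⁻¹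
            * B.toFunL f ((⇑α.symm)^[n] x) := by
    intro n
    induction n with
    | zero => intro f x; simp
    | succ n ih =>
      intro f x
      rw [pow_succ, ContinuousLinearMap.mul_apply, ih (S f) x, hS f ((⇑α.symm)^[n] x),
        Finset.prod_Icc_succ_top (by omega : 1 ≤ n + 1), mul_inv,
        ← Function.iterate_succ_apply' (⇑α.symm) n x]
      ring
  -- power cancellation
  have hTS_pow : ∀ (n l : ℕ) (f : F), (T ^ n) ((S ^ (n + l)) f) = (S ^ l) f := by
    intro n
    induction n with
    | zero => intro l f; simp
    | succ n ih =>
      intro l f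
      have e : n + 1 + l = (n + l) + 1 := by omega
      rw [pow_succ, ContinuousLinearMap.mul_apply, e, pow_succ',
        ContinuousLinearMap.mul_apply, hTS, ih]
  have hST_pow : ∀ (n l : ℕ) (f : F), (S ^ n) ((T ^ (n + l)) f) = (T ^ l) f := by
    intro n
    induction n with
    | zero => intro l f; simp
    | succ n ih =>
      intro l f
      have e : n + 1 + l = (n + l) + 1 := by omega
      rw [pow_succ, ContinuousLinearMap.mul_apply, e, pow_succ',
        ContinuousLinearMap.mul_apply, hST, ih]
  -- iterated invariance
  have hIterA : ∀ (f : F) (n : ℕ),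
      ∃ g : F, B.toFunL g = B.toFunL f ∘ (⇑α)^[n] ∧ ‖g‖ = ‖f‖ := by
    intro f n
    induction n with
    | zero => exact ⟨f, by simp, rfl⟩
    | succ n ih =>
      obtain ⟨g, hg, hn⟩ := ih
      obtain ⟨g', hg', hn'⟩ := (hinv g).1
      refine ⟨g', ?_, hn'.trans hn⟩
      rw [hg', hg]
      funext x
      simp [Function.iterate_succ_apply]
  have hIterS : ∀ (f : F) (n : ℕ),
      ∃ g : F, B.toFunL g = B.toFunL f ∘ (⇑α.symm)^[n] ∧ ‖g‖ = ‖f‖ := by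
    intro f n
    induction n with
    | zero => exact ⟨f, by simp, rfl⟩
    | succ n ih =>
      obtain ⟨g, hg, hn⟩ := ih
      obtain ⟨g', hg', hn'⟩ := (hinv g).2
      refine ⟨g', ?_, hn'.trans hn⟩
      rw [hg', hg]
      funext x
      simp [Function.iterate_succ_apply]
  -- solidity in norm form
  have domin : ∀ (u : F) (M : ℝ), 0 ≤ M → ∀ (v : F),
      (∀ x, ‖B.toFunL u x‖ ≤ M * ‖B.toFunL v x‖) → ‖u‖ ≤ M * ‖v‖ := by
    intro u M hM v hb
    have hnorm : ‖(M : ℂ) • v‖ = M * ‖v‖ := by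
      simp [norm_smul, abs_of_nonneg hM]
    have hdom : ∀ x, ‖B.toFunL u x‖ ≤ ‖B.toFunL ((M : ℂ) • v) x‖ := by
      intro x
      have h1 : ‖B.toFunL ((M : ℂ) • v) x‖ = M * ‖B.toFunL v x‖ := by
        rw [map_smul, Pi.smul_apply]
        simp [norm_smul, abs_of_nonneg hM]
      rw [h1]
      exact hb x
    obtain ⟨u', hu', hn⟩ := hsolid ((M : ℂ) • v) (B.toFunL u) (B.measurable' u) hdom
    have hu : u' = u := B.injective hu'
    rw [← hu]
    exact hn.trans (le_of_eq hnorm)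
  -- mixed iterate identities
  have hLiA : Function.LeftInverse (⇑α) (⇑α.symm) := α.apply_symm_apply
  have hLiS : Function.LeftInverse (⇑α.symm) (⇑α) := α.symm_apply_apply
  have hriA : ∀ (n : ℕ) (x : X), (⇑α)^[n] ((⇑α.symm)^[n] x) = x := by
    intro n x; exact (hLiA.iterate n) x
  have hriS : ∀ (n : ℕ) (x : X), (⇑α.symm)^[n] ((⇑α)^[n] x) = x := by
    intro n x; exact (hLiS.iterate n) x
  have hmixA : ∀ (n s : ℕ), s ≤ n → ∀ x : X,
      (⇑α)^[s] ((⇑α.symm)^[n] x) = (⇑α.symm)^[n - s] x := by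
    intro n s hs x
    have h1 : (⇑α.symm)^[n] x = (⇑α.symm)^[s] ((⇑α.symm)^[n - s] x) := by
      rw [← Function.iterate_add_apply]
      congr 1
      omega
    rw [h1, (hLiA.iterate s) _]
  have hmixS : ∀ (n s : ℕ), s ≤ n → ∀ x : X,
      (⇑α.symm)^[s] ((⇑α)^[n] x) = (⇑α)^[n - s] x := by
    intro n s hs x
    have h1 : (⇑α)^[n] x = (⇑α)^[s] ((⇑α)^[n - s] x) := by
      rw [← Function.iterate_add_apply]
      congr 1
      omega
    rw [h1, (hLiS.iterate s) _]
  -- product identities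
  have hprodT : ∀ (n : ℕ) (y : X),
      (∏ s ∈ Finset.range n, (w ((⇑α)^[s] ((⇑α.symm)^[n] y)) : ℂ))
        = ((∏ s ∈ Finset.Icc 1 n, w ((⇑α.symm)^[s] y) : ℝ) : ℂ) := by
    intro n y
    push_cast
    rw [← prod_range_sub_aux (fun t => (w ((⇑α.symm)^[t] y) : ℂ)) n]
    refine Finset.prod_congr rfl ?_
    intro s hs
    rw [hmixA n s (le_of_lt (Finset.mem_range.1 hs)) y]
  have hprodS : ∀ (n : ℕ) (y : X),
      (∏ s ∈ Finset.Icc 1 n, (w ((⇑α.symm)^[s] ((⇑α)^[n] y)) : ℂ))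
        = ((∏ s ∈ Finset.range n, w ((⇑α)^[s] y) : ℝ) : ℂ) := by
    intro n y
    push_cast
    rw [← prod_Icc_sub_aux (fun t => (w ((⇑α)^[t] y) : ℂ)) n]
    refine Finset.prod_congr rfl ?_
    intro s hs
    rw [hmixS n s (Finset.mem_Icc.1 hs).2 y]
  -- key estimate for T-powers
  have keyT : ∀ (D : Set X) (M : ℝ), 0 ≤ M → ∀ f : F,
      (∀ x, x ∉ D → B.toFunL f x = 0) → (∀ x, ‖B.toFunL f x‖ ≤ M) →
      ∀ (n : ℕ) (a : F), B.toFunL a = Set.indicator D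
        (fun x => ((∏ s ∈ Finset.Icc 1 n, w ((⇑α.symm)^[s] x) : ℝ) : ℂ)) →
      ‖(T ^ n) f‖ ≤ M * ‖a‖ := by
    intro D M hM f hf0 hfM n a hav
    obtain ⟨g, hg, hgn⟩ := hIterS ((T ^ n) f) n
    rw [← hgn]
    refine domin g M hM a ?_
    intro y
    have hgy : B.toFunL g y
        = ((∏ s ∈ Finset.Icc 1 n, w ((⇑α.symm)^[s] y) : ℝ) : ℂ) * B.toFunL f y := by
      have h1 := congrFun hg y
      rw [Function.comp_apply] at h1
      rw [h1, hTn n f ((⇑α.symm)^[n] y), hriA, hprodT]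
    by_cases hy : y ∈ D
    · rw [hgy, hav, Set.indicator_of_mem hy, norm_mul, mul_comm]
      exact mul_le_mul_of_nonneg_right (hfM y) (norm_nonneg _)
    · rw [hgy, hf0 y hy, mul_zero, norm_zero]
      positivity
  -- key estimate for S-powers
  have keyS : ∀ (D : Set X) (M : ℝ), 0 ≤ M → ∀ f : F,
      (∀ x, x ∉ D → B.toFunL f x = 0) → (∀ x, ‖B.toFunL f x‖ ≤ M) →
      ∀ (n : ℕ) (b : F), B.toFunL b = Set.indicator D
        (fun x => (((∏ s ∈ Finset.range n, w ((⇑α)^[s] x))⁻¹ : ℝ) : ℂ)) →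
      ‖(S ^ n) f‖ ≤ M * ‖b‖ := by
    intro D M hM f hf0 hfM n b hbv
    obtain ⟨g, hg, hgn⟩ := hIterA ((S ^ n) f) n
    rw [← hgn]
    refine domin g M hM b ?_
    intro y
    have hgy : B.toFunL g y
        = (((∏ s ∈ Finset.range n, w ((⇑α)^[s] y))⁻¹ : ℝ) : ℂ) * B.toFunL f y := by
      have h1 := congrFun hg y
      rw [Function.comp_apply] at h1
      rw [h1, hSn n f ((⇑α)^[n] y), hriS, hprodS]
      push_cast
      ring
    by_cases hy : y ∈ D
    · rw [hgy, hbv, Set.indicator_of_mem hy, norm_mul, mul_comm]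
      exact mul_le_mul_of_nonneg_right (hfM y) (norm_nonneg _)
    · rw [hgy, hf0 y hy, mul_zero, norm_zero]
      positivity
  have hhalf : ∀ y : F, ‖(2:ℂ)⁻¹ • y‖ ≤ ‖y‖ := by
    intro y
    rw [norm_smul]
    have h : ‖(2:ℂ)⁻¹‖ ≤ 1 := by norm_num
    nlinarith [norm_nonneg y, norm_nonneg ((2:ℂ)⁻¹)]
  constructor
  · -- topological transitivity
    intro U V hU hV hUne hVne
    obtain ⟨f, ⟨⟨Mf, hMf⟩, Kf, hKf, hKfs⟩, hfU⟩ := hdense.exists_mem_open hU hUne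
    obtain ⟨h, ⟨⟨Mh, hMh⟩, Kh, hKh, hKhs⟩, hhV⟩ := hdense.exists_mem_open hV hVne
    obtain ⟨rf, hrf, hrfU⟩ := Metric.isOpen_iff.1 hU f hfU
    obtain ⟨rh, hrh, hrhV⟩ := Metric.isOpen_iff.1 hV h hhV
    have hK : IsCompact (Kf ∪ Kh) := hKf.union hKh
    set K := Kf ∪ Kh with hKdef
    set M : ℝ := max (max Mf Mh) 0 with hMdef
    have hM0 : (0:ℝ) ≤ M := le_max_right _ _
    have hMfM : Mf ≤ M := le_trans (le_max_left _ _) (le_max_left _ _)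
    have hMhM : Mh ≤ M := le_trans (le_max_right _ _) (le_max_left _ _)
    obtain ⟨D, nk, g, a, b, hDm, hDK, hnkmono, hnkpos, hgv, htg, hav, haSum, htA,
      hbv, hbSum, htB⟩ := hcond K hK
    set ε := min rf rh with hεdef
    have hε : 0 < ε := lt_min hrf hrh
    have hQ : Tendsto (fun k => M * ‖g k‖
        + (M * (∑' l, ‖a k l‖) + 3 * (M * (∑' l, ‖b k l‖)))) atTop (𝓝 0) := by
      have h1 := (htg.const_mul M).add ((htA.const_mul M).add ((htB.const_mul M).const_mul 3))
      simpa using h1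
    obtain ⟨k, hk⟩ := (hQ.eventually_lt_const hε).exists
    set n := nk k with hndef
    set Ak := ∑' l, ‖a k l‖ with hAkdef
    set Bk := ∑' l, ‖b k l‖ with hBkdef
    have hAk0 : 0 ≤ Ak := tsum_nonneg (fun _ => norm_nonneg _)
    have hBk0 : 0 ≤ Bk := tsum_nonneg (fun _ => norm_nonneg _)
    have ha0A : ‖a k 0‖ ≤ Ak := Summable.le_tsum (haSum k) 0 (fun _ _ => norm_nonneg _)
    have hb0B : ‖b k 0‖ ≤ Bk := Summable.le_tsum (hbSum k) 0 (fun _ _ => norm_nonneg _)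
    have hb1B : ‖b k 1‖ ≤ Bk := Summable.le_tsum (hbSum k) 1 (fun _ _ => norm_nonneg _)
    -- truncations
    have trunc : ∀ (f : F) (Kf : Set X), (∀ x ∉ Kf, B.toFunL f x = 0) → Kf ⊆ K →
        (∀ x, ‖B.toFunL f x‖ ≤ M) →
        ∃ fk : F, B.toFunL fk = (D k).indicator (B.toFunL f) ∧ ‖f - fk‖ ≤ M * ‖g k‖ := by
      intro f Kf hKfs hKfK hfM
      have hdom : ∀ x, ‖Set.indicator (D k) (B.toFunL f) x‖ ≤ ‖B.toFunL f x‖ := by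
        intro x
        by_cases hx : x ∈ D k
        · rw [Set.indicator_of_mem hx]
        · rw [Set.indicator_of_notMem hx, norm_zero]
          exact norm_nonneg _
      obtain ⟨fk, hfk, _⟩ := hsolid f ((D k).indicator (B.toFunL f))
        ((B.measurable' f).indicator (hDm k)) hdom
      refine ⟨fk, hfk, ?_⟩
      refine domin _ M hM0 (g k) ?_
      intro x
      rw [map_sub, Pi.sub_apply, hfk, hgv k]
      by_cases hx : x ∈ D k
      · rw [Set.indicator_of_mem hx, sub_self, norm_zero]
        positivity
      · rw [Set.indicator_of_notMem hx, sub_zero]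
        by_cases hxK : x ∈ K
        · have hxKD : x ∈ K \ D k := Set.mem_diff_of_mem hxK hx
          rw [Set.indicator_of_mem hxKD]
          simpa using hfM x
        · rw [hKfs x (fun hm => hxK (hKfK hm)), norm_zero]
          positivity
    obtain ⟨fk, hfkeq, hfkcl⟩ := trunc f Kf hKfs Set.subset_union_left
      (fun x => (hMf x).trans hMfM)
    obtain ⟨hk', hhkeq, hhkcl⟩ := trunc h Kh hKhs Set.subset_union_right
      (fun x => (hMh x).trans hMhM)
    have hfk0 : ∀ x, x ∉ D k → B.toFunL fk x = 0 := fun x hx => by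
      rw [hfkeq]; exact Set.indicator_of_notMem hx _
    have hfkM : ∀ x, ‖B.toFunL fk x‖ ≤ M := by
      intro x
      rw [hfkeq]
      by_cases hx : x ∈ D k
      · rw [Set.indicator_of_mem hx]; exact (hMf x).trans hMfM
      · rw [Set.indicator_of_notMem hx, norm_zero]; exact hM0
    have hhk0 : ∀ x, x ∉ D k → B.toFunL hk' x = 0 := fun x hx => by
      rw [hhkeq]; exact Set.indicator_of_notMem hx _
    have hhkM : ∀ x, ‖B.toFunL hk' x‖ ≤ M := by
      intro x
      rw [hhkeq]
      by_cases hx : x ∈ D k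
      · rw [Set.indicator_of_mem hx]; exact (hMh x).trans hMhM
      · rw [Set.indicator_of_notMem hx, norm_zero]; exact hM0
    -- the basic bounds
    have e0 : (0 + 1) * nk k = n := by rw [hndef]; ring
    have e1 : (1 + 1) * nk k = 2 * n := by rw [hndef]
    have hTfk : ‖(T ^ n) fk‖ ≤ M * ‖a k 0‖ := by
      have := hav k 0
      rw [e0] at this
      exact keyT (D k) M hM0 fk hfk0 hfkM n (a k 0) this
    have hSfk : ‖(S ^ n) fk‖ ≤ M * ‖b k 0‖ := by
      have := hbv k 0
      rw [e0] at this
      exact keyS (D k) M hM0 fk hfk0 hfkM n (b k 0) this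
    have hShk : ‖(S ^ n) hk'‖ ≤ M * ‖b k 0‖ := by
      have := hbv k 0
      rw [e0] at this
      exact keyS (D k) M hM0 hk' hhk0 hhkM n (b k 0) this
    have hS2hk : ‖(S ^ (2 * n)) hk'‖ ≤ M * ‖b k 1‖ := by
      have := hbv k 1
      rw [e1] at this
      exact keyS (D k) M hM0 hk' hhk0 hhkM (2 * n) (b k 1) this
    set u := fk + (2 : ℂ) • ((S ^ n) hk') with hudef
    have huU : u ∈ U := by
      refine hrfU ?_
      rw [Metric.mem_ball, dist_eq_norm]
      have h1 : u - f = (fk - f) + (2 : ℂ) • ((S ^ n) hk') := by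
        rw [hudef]; abel
      have h2 : ‖u - f‖ ≤ ‖f - fk‖ + 2 * ‖(S ^ n) hk'‖ := by
        rw [h1]
        refine (norm_add_le _ _).trans ?_
        rw [norm_sub_rev, norm_smul]
        gcongr
        simp
      have h3 : M * ‖b k 0‖ ≤ M * Bk := mul_le_mul_of_nonneg_left hb0B hM0
      have h4 : 0 ≤ M * Ak := by positivity
      have h5 : 0 ≤ M * Bk := by positivity
      have h6 : ε ≤ rf := min_le_left _ _
      have h7 : 0 ≤ M * ‖g k‖ := mul_nonneg hM0 (norm_nonneg _)
      linarith [hShk, h2, h3]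
    have hTSn : (T ^ n) ((S ^ n) hk') = hk' := by
      have := hTS_pow n 0 hk'
      simpa using this
    have hSSn : (S ^ n) ((S ^ n) hk') = (S ^ (2 * n)) hk' := by
      rw [← ContinuousLinearMap.mul_apply, ← pow_add]
      congr 1
      ring
    have hCu : (cosOp T S n) u = hk' + ((2:ℂ)⁻¹ • ((T ^ n) fk)
        + ((2:ℂ)⁻¹ • ((S ^ n) fk) + (S ^ (2 * n)) hk')) := by
      have h1 : (T ^ n) u = (T ^ n) fk + (2 : ℂ) • hk' := by
        rw [hudef, map_add, map_smul, hTSn]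
      have h2 : (S ^ n) u = (S ^ n) fk + (2 : ℂ) • ((S ^ (2 * n)) hk') := by
        rw [hudef, map_add, map_smul, hSSn]
      show ((2:ℂ)⁻¹ • ((T ^ n) + (S ^ n))) u = _
      rw [ContinuousLinearMap.smul_apply, ContinuousLinearMap.add_apply, h1, h2]
      have h2ne : (2:ℂ) ≠ 0 := two_ne_zero
      rw [smul_add, smul_add, smul_add, smul_smul, smul_smul,
        inv_mul_cancel₀ h2ne, one_smul, one_smul]
      abel
    have hCV : (cosOp T S n) u ∈ V := by
      refine hrhV ?_
      rw [Metric.mem_ball, dist_eq_norm]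
      have h1 : (cosOp T S n) u - h = (hk' - h) + ((2:ℂ)⁻¹ • ((T ^ n) fk)
          + ((2:ℂ)⁻¹ • ((S ^ n) fk) + (S ^ (2 * n)) hk')) := by
        rw [hCu]; abel
      have h2 : ‖(cosOp T S n) u - h‖ ≤ ‖h - hk'‖ + (‖(T ^ n) fk‖
          + (‖(S ^ n) fk‖ + ‖(S ^ (2 * n)) hk'‖)) := by
        rw [h1]
        refine (norm_add_le _ _).trans ?_
        rw [norm_sub_rev]
        gcongr
        refine (norm_add_le _ _).trans ?_
        gcongr
        · exact hhalf _
        refine (norm_add_le _ _).trans ?_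
        gcongr
        exact hhalf _
      have h3 : M * ‖a k 0‖ ≤ M * Ak := mul_le_mul_of_nonneg_left ha0A hM0
      have h4 : M * ‖b k 0‖ ≤ M * Bk := mul_le_mul_of_nonneg_left hb0B hM0
      have h5 : M * ‖b k 1‖ ≤ M * Bk := mul_le_mul_of_nonneg_left hb1B hM0
      have h6 : ε ≤ rh := min_le_right _ _
      have h7 : 0 ≤ M * ‖g k‖ := mul_nonneg hM0 (norm_nonneg _)
      have h8 : 0 ≤ M * Bk := mul_nonneg hM0 hBk0
      have h9 : 0 ≤ M * Ak := mul_nonneg hM0 hAk0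
      linarith [hTfk, hSfk, hS2hk, h2, h3, h4, h5, hhkcl]
    exact ⟨n, hnkpos k, ⟨(cosOp T S n) u, ⟨u, huU, rfl⟩, hCV⟩⟩
  · -- dense periodic points
    rw [Metric.dense_iff]
    intro f ε hε
    obtain ⟨f', hf'ball, ⟨Mf, hMf⟩, K, hK, hKsupp⟩ :=
      Metric.dense_iff.1 hdense f (ε / 2) (by positivity)
    set M : ℝ := max Mf 0 with hMdef
    have hM0 : (0:ℝ) ≤ M := le_max_right _ _
    have hMfM : Mf ≤ M := le_max_left _ _
    obtain ⟨D, nk, g, a, b, hDm, hDK, hnkmono, hnkpos, hgv, htg, hav, haSum, htA,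
      hbv, hbSum, htB⟩ := hcond K hK
    have hQ : Tendsto (fun k => M * ‖g k‖
        + (M * (∑' l, ‖a k l‖) + M * (∑' l, ‖b k l‖))) atTop (𝓝 0) := by
      have h1 := (htg.const_mul M).add ((htA.const_mul M).add (htB.const_mul M))
      simpa using h1
    obtain ⟨k, hk⟩ := (hQ.eventually_lt_const (by positivity : (0:ℝ) < ε / 2)).exists
    set n := nk k with hndef
    have hn : 0 < n := hnkpos k
    -- truncation of f'
    obtain ⟨fk, hfkeq, _⟩ := hsolid f' ((D k).indicator (B.toFunL f'))
      ((B.measurable' f').indicator (hDm k)) (by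
        intro x
        by_cases hx : x ∈ D k
        · rw [Set.indicator_of_mem hx]
        · rw [Set.indicator_of_notMem hx, norm_zero]
          exact norm_nonneg _)
    have hfk0 : ∀ x, x ∉ D k → B.toFunL fk x = 0 := fun x hx => by
      rw [hfkeq]; exact Set.indicator_of_notMem hx _
    have hfkM : ∀ x, ‖B.toFunL fk x‖ ≤ M := by
      intro x
      rw [hfkeq]
      by_cases hx : x ∈ D k
      · rw [Set.indicator_of_mem hx]; exact (hMf x).trans hMfM
      · rw [Set.indicator_of_notMem hx, norm_zero]; exact hM0
    have hfkcl : ‖f' - fk‖ ≤ M * ‖g k‖ := by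
      refine domin _ M hM0 (g k) ?_
      intro x
      rw [map_sub, Pi.sub_apply, hfkeq, hgv k]
      by_cases hx : x ∈ D k
      · rw [Set.indicator_of_mem hx, sub_self, norm_zero]
        positivity
      · rw [Set.indicator_of_notMem hx, sub_zero]
        by_cases hxK : x ∈ K
        · have hxKD : x ∈ K \ D k := Set.mem_diff_of_mem hxK hx
          rw [Set.indicator_of_mem hxKD]
          simpa using (hMf x).trans hMfM
        · rw [hKsupp x hxK, norm_zero]
          positivity
    -- the series
    have hTb : ∀ l : ℕ, ‖(T ^ ((l + 1) * n)) fk‖ ≤ M * ‖a k l‖ := fun l =>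
      keyT (D k) M hM0 fk hfk0 hfkM ((l + 1) * n) (a k l) (hav k l)
    have hSb : ∀ l : ℕ, ‖(S ^ ((l + 1) * n)) fk‖ ≤ M * ‖b k l‖ := fun l =>
      keyS (D k) M hM0 fk hfk0 hfkM ((l + 1) * n) (b k l) (hbv k l)
    have hTnormSum : Summable (fun l => ‖(T ^ ((l + 1) * n)) fk‖) :=
      Summable.of_nonneg_of_le (fun _ => norm_nonneg _) hTb ((haSum k).mul_left M)
    have hSnormSum : Summable (fun l => ‖(S ^ ((l + 1) * n)) fk‖) :=
      Summable.of_nonneg_of_le (fun _ => norm_nonneg _) hSb ((hbSum k).mul_left M)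
    have hTsum : Summable (fun l => (T ^ ((l + 1) * n)) fk) := hTnormSum.of_norm
    have hSsum : Summable (fun l => (S ^ ((l + 1) * n)) fk) := hSnormSum.of_norm
    set pT := ∑' l, (T ^ ((l + 1) * n)) fk with hpTdef
    set pS := ∑' l, (S ^ ((l + 1) * n)) fk with hpSdef
    set p := fk + pT + pS with hpdef
    have hvTsum : Summable (fun l => (T ^ (l * n)) fk) := by
      rw [← summable_nat_add_iff 1]
      exact hTsum
    have hvSsum : Summable (fun l => (S ^ (l * n)) fk) := by
      rw [← summable_nat_add_iff 1]
      exact hSsum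
    have hTp : (T ^ n) p = p := by
      rw [hpdef, map_add, map_add, hpTdef, hpSdef,
        ContinuousLinearMap.map_tsum _ hTsum, ContinuousLinearMap.map_tsum _ hSsum]
      have e1 : ∀ l : ℕ, (T ^ n) ((T ^ ((l + 1) * n)) fk) = (T ^ ((l + 1) * n + n)) fk := by
        intro l
        rw [← ContinuousLinearMap.mul_apply, ← pow_add]
        congr 1
        ring
      have e2 : ∀ l : ℕ, (T ^ n) ((S ^ ((l + 1) * n)) fk) = (S ^ (l * n)) fk := by
        intro l
        have e : (l + 1) * n = n + l * n := by ring
        rw [e]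
        exact hTS_pow n (l * n) fk
      rw [tsum_congr e1, tsum_congr e2]
      have hA : ∑' l : ℕ, (T ^ ((l + 1) * n)) fk
          = (T ^ n) fk + ∑' l : ℕ, (T ^ ((l + 1) * n + n)) fk := by
        have h1 := Summable.tsum_eq_zero_add hTsum
        rw [h1]
        congr 1
        · norm_num
        · refine tsum_congr ?_
          intro l
          congr 2
          ring
      have hB : ∑' l : ℕ, (S ^ (l * n)) fk = fk + ∑' l : ℕ, (S ^ ((l + 1) * n)) fk := by
        have h1 := Summable.tsum_eq_zero_add hvSsum
        rw [h1]
        congr 1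
        norm_num
      rw [hB, ← hA]
      abel
    have hSp : (S ^ n) p = p := by
      rw [hpdef, map_add, map_add, hpTdef, hpSdef,
        ContinuousLinearMap.map_tsum _ hTsum, ContinuousLinearMap.map_tsum _ hSsum]
      have e1 : ∀ l : ℕ, (S ^ n) ((S ^ ((l + 1) * n)) fk) = (S ^ ((l + 1) * n + n)) fk := by
        intro l
        rw [← ContinuousLinearMap.mul_apply, ← pow_add]
        congr 1
        ring
      have e2 : ∀ l : ℕ, (S ^ n) ((T ^ ((l + 1) * n)) fk) = (T ^ (l * n)) fk := by
        intro l
        have e : (l + 1) * n = n + l * n := by ring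
        rw [e]
        exact hST_pow n (l * n) fk
      rw [tsum_congr e1, tsum_congr e2]
      have hA : ∑' l : ℕ, (S ^ ((l + 1) * n)) fk
          = (S ^ n) fk + ∑' l : ℕ, (S ^ ((l + 1) * n + n)) fk := by
        have h1 := Summable.tsum_eq_zero_add hSsum
        rw [h1]
        congr 1
        · norm_num
        · refine tsum_congr ?_
          intro l
          congr 2
          ring
      have hB : ∑' l : ℕ, (T ^ (l * n)) fk = fk + ∑' l : ℕ, (T ^ ((l + 1) * n)) fk := by
        have h1 := Summable.tsum_eq_zero_add hvTsum
        rw [h1]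
        congr 1
        norm_num
      rw [hA, ← hB]
      abel
    have powfix : ∀ (A : F →L[ℂ] F), A p = p → ∀ j : ℕ, (A ^ j) p = p := by
      intro A hA j
      induction j with
      | zero => simp
      | succ j ih => rw [pow_succ, ContinuousLinearMap.mul_apply, hA, ih]
    have hper : p ∈ periodicSet (cosOp T S) := by
      refine ⟨n, hn, fun m hm => ?_⟩
      have h1 : (T ^ (m * n)) p = p := by
        rw [mul_comm, pow_mul]
        exact powfix (T ^ n) hTp m
      have h2 : (S ^ (m * n)) p = p := by
        rw [mul_comm, pow_mul]
        exact powfix (S ^ n) hSp m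
      show ((2:ℂ)⁻¹ • ((T ^ (m * n)) + (S ^ (m * n)))) p = p
      rw [ContinuousLinearMap.smul_apply, ContinuousLinearMap.add_apply, h1, h2,
        ← two_smul ℂ p, smul_smul, inv_mul_cancel₀ (two_ne_zero), one_smul]
    refine ⟨p, ?_, hper⟩
    rw [Metric.mem_ball, dist_eq_norm]
    have h1 : ‖p - fk‖ ≤ M * (∑' l, ‖a k l‖) + M * (∑' l, ‖b k l‖) := by
      have hpq : p - fk = pT + pS := by rw [hpdef]; abel
      rw [hpq]
      refine (norm_add_le _ _).trans ?_
      have h2 : ‖pT‖ ≤ ∑' l, ‖(T ^ ((l + 1) * n)) fk‖ := norm_tsum_le_tsum_norm hTnormSum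
      have h3 : ‖pS‖ ≤ ∑' l, ‖(S ^ ((l + 1) * n)) fk‖ := norm_tsum_le_tsum_norm hSnormSum
      have h4 : (∑' l, ‖(T ^ ((l + 1) * n)) fk‖) ≤ ∑' l, M * ‖a k l‖ :=
        Summable.tsum_le_tsum hTb hTnormSum ((haSum k).mul_left M)
      have h5 : (∑' l, ‖(S ^ ((l + 1) * n)) fk‖) ≤ ∑' l, M * ‖b k l‖ :=
        Summable.tsum_le_tsum hSb hSnormSum ((hbSum k).mul_left M)
      rw [tsum_mul_left] at h4 h5
      linarith
    have h2 : ‖f' - f‖ < ε / 2 := by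
      rw [← dist_eq_norm]
      exact Metric.mem_ball.1 hf'ball
    have h3 : ‖p - f‖ ≤ (‖p - fk‖ + ‖f' - fk‖) + ‖f' - f‖ := by
      have he : p - f = ((p - fk) - (f' - fk)) + (f' - f) := by abel
      rw [he]
      exact (norm_add_le _ _).trans (add_le_add_left (norm_sub_le _ _) _)
    linarith [h1, hfkcl, hk, h2, h3]
end

section
/- Let X be a topological space, let α : X → X be a bijection such that α and α⁻¹ are Borel measurable, let F be a Banach function space on X satisfying condition Ω_α, and let w and 1/w both be weights on X. Suppose there exist a nonempty compact subset K of X and N > 0 such that α^n(K) ∩ K = ∅ for all n ≥ N. If the adjoint sequence (C^{(n)*}_{α,w})_{n∈ℕ₀} is chaotic on the dual space F′, then inf_{x∈X} w(x) < 1 < sup_{x∈X} w(x). -/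
open Filter Topology

/-- The adjoint `T* φ = φ ∘ T` of a bounded operator, acting on the dual space. -/
noncomputable def adjOp {F : Type*} [NormedAddCommGroup F] [NormedSpace ℂ F]
    (T : F →L[ℂ] F) : (F →L[ℂ] ℂ) →L[ℂ] (F →L[ℂ] ℂ) :=
  (ContinuousLinearMap.compL ℂ F F ℂ).flip T


section Aux

variable {F : Type*} [NormedAddCommGroup F] [NormedSpace ℂ F]

lemma adjOp_apply (T : F →L[ℂ] F) (φ : F →L[ℂ] ℂ) (f : F) :
    adjOp T φ f = φ (T f) := rfl

lemma cosOp_apply (T S : F →L[ℂ] F) (n : ℕ) (f : F) :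
    cosOp T S n f = (2:ℂ)⁻¹ • ((T^n) f + (S^n) f) := by
  simp [cosOp]

lemma pow_apply_add (S : F →L[ℂ] F) (a b : ℕ) (x : F) :
    (S^(a+b)) x = (S^a) ((S^b) x) := by
  rw [pow_add]; rfl

set_option maxHeartbeats 1000000 in
lemma key (T S : F →L[ℂ] F) (hST : ∀ f, S (T f) = f) (hTS : ∀ f, T (S f) = f)
    (hS : ∀ f : F, ‖S f‖ ≤ ‖f‖)
    (hchaos : IsChaotic fun n => adjOp (cosOp T S n))
    (f₀ : F) (hf₀ : f₀ ≠ 0) : False := by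
  have hSTn : ∀ (n : ℕ) (x : F), (S^n) ((T^n) x) = x := by
    intro n
    induction n with
    | zero => intro x; simp
    | succ n ih =>
      intro x
      rw [pow_succ S n, pow_succ' T n, ContinuousLinearMap.mul_apply,
        ContinuousLinearMap.mul_apply, hST, ih]
  have hTSn : ∀ (n : ℕ) (x : F), (T^n) ((S^n) x) = x := by
    intro n
    induction n with
    | zero => intro x; simp
    | succ n ih =>
      intro x
      rw [pow_succ T n, pow_succ' S n, ContinuousLinearMap.mul_apply,
        ContinuousLinearMap.mul_apply, hTS, ih]
  have hSn : ∀ (n : ℕ) (x : F), ‖(S^n) x‖ ≤ ‖x‖ := by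
    intro n
    induction n with
    | zero => intro x; simp
    | succ n ih =>
      intro x
      rw [pow_succ S n, ContinuousLinearMap.mul_apply]
      exact le_trans (ih (S x)) (hS x)
  -- a nonzero functional
  obtain ⟨φ₀, hφ₀n, hφ₀v⟩ := exists_dual_vector ℂ f₀ (norm_ne_zero_iff.mpr hf₀)
  -- a nonzero periodic point
  obtain ⟨φ, hφper, hφball⟩ := hchaos.2.exists_mem_open Metric.isOpen_ball
    ⟨φ₀, Metric.mem_ball_self (by norm_num : (0:ℝ) < 1/2)⟩
  have hφpos : (0:ℝ) < ‖φ‖ := by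
    have hd : dist φ φ₀ < 1/2 := Metric.mem_ball.mp hφball
    have h1 : ‖φ₀‖ - ‖φ‖ ≤ ‖φ₀ - φ‖ := norm_sub_norm_le _ _
    have h2 : ‖φ₀ - φ‖ = dist φ φ₀ := by rw [dist_comm, dist_eq_norm]
    rw [h2] at h1
    linarith [hφ₀n ▸ h1]
  obtain ⟨M, hM0, hMper⟩ := hφper
  have hφC : ∀ f : F, φ ((cosOp T S M) f) = φ f := by
    intro f
    have h := hMper 1 one_pos
    rw [one_mul] at h
    have := DFunLike.congr_fun h f
    rwa [adjOp_apply] at this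
  have hrel : ∀ f : F, φ ((T^M) f) + φ ((S^M) f) = 2 * φ f := by
    intro f
    have h := hφC f
    rw [cosOp_apply, map_smul, map_add, smul_eq_mul] at h
    linear_combination 2 * h
  -- constancy of j ↦ φ (S^(M j) x)
  have hconst : ∀ (j : ℕ) (x : F), φ ((S ^ (M * j)) x) = φ x := by
    intro j x
    have hnorm : ∀ j : ℕ, ‖φ ((S ^ (M * j)) x)‖ ≤ ‖φ‖ * ‖x‖ := by
      intro j
      calc ‖φ ((S ^ (M*j)) x)‖ ≤ ‖φ‖ * ‖(S ^ (M*j)) x‖ := φ.le_opNorm _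
      _ ≤ ‖φ‖ * ‖x‖ := mul_le_mul_of_nonneg_left (hSn _ x) (norm_nonneg φ)
    have hrec : ∀ j : ℕ, φ ((S ^ (M * j)) x) + φ ((S ^ (M * (j+2))) x)
        = 2 * φ ((S ^ (M * (j+1))) x) := by
      intro j
      have h := hrel ((S ^ (M * (j+1))) x)
      have e1 : (T^M) ((S ^ (M * (j+1))) x) = (S ^ (M * j)) x := by
        rw [show M * (j+1) = M + M * j by ring, pow_apply_add, hTSn]
      have e2 : (S^M) ((S ^ (M * (j+1))) x) = (S ^ (M * (j+2))) x := by
        rw [show M * (j+2) = M + M * (j+1) by ring, pow_apply_add]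
      rw [e1, e2] at h
      linear_combination h
    have hbase1 : φ ((S ^ (M * 1)) x) = φ ((S ^ M) x) := by rw [mul_one]
    have hbase0 : φ ((S ^ (M * 0)) x) = φ x := by
      rw [mul_zero, pow_zero, ContinuousLinearMap.one_apply]
    have hdiff : ∀ j : ℕ, φ ((S ^ (M * (j+1))) x) - φ ((S ^ (M * j)) x)
        = φ ((S ^ M) x) - φ x := by
      intro j
      induction j with
      | zero => rw [hbase1, hbase0]
      | succ j ih => linear_combination ih + hrec j
    have hlin : ∀ j : ℕ, φ ((S ^ (M*j)) x)
        = φ x + (j:ℂ) * (φ ((S^M) x) - φ x) := by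
      intro j
      induction j with
      | zero => rw [hbase0]; ring
      | succ j ih =>
        rw [Nat.cast_succ]
        linear_combination ih + hdiff j
    have hd0 : φ ((S^M) x) - φ x = 0 := by
      by_contra hne
      have hpos : 0 < ‖φ ((S^M) x) - φ x‖ := by
        rwa [norm_pos_iff, ne_eq]
      obtain ⟨j, hj⟩ := exists_nat_gt
        ((2 * (‖φ‖ * ‖x‖)) / ‖φ ((S^M) x) - φ x‖)
      have h2 : (j:ℂ) * (φ ((S^M) x) - φ x)
          = φ ((S^(M*j)) x) - φ ((S^(M*0)) x) := by
        rw [hbase0, hlin j]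
        ring
      have h1 : ‖(j:ℂ) * (φ ((S^M) x) - φ x)‖ ≤ 2 * (‖φ‖ * ‖x‖) := by
        rw [h2]
        calc ‖φ ((S^(M*j)) x) - φ ((S^(M*0)) x)‖
            ≤ ‖φ ((S^(M*j)) x)‖ + ‖φ ((S^(M*0)) x)‖ := norm_sub_le _ _
        _ ≤ ‖φ‖ * ‖x‖ + ‖φ‖ * ‖x‖ := add_le_add (hnorm j) (hnorm 0)
        _ = 2 * (‖φ‖ * ‖x‖) := by ring
      rw [norm_mul, Complex.norm_natCast] at h1
      have hj2 : (2 * (‖φ‖ * ‖x‖)) / ‖φ ((S^M) x) - φ x‖ < (j:ℝ) := hj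
      have := (div_lt_iff₀ hpos).mp hj2
      nlinarith
    have := hlin j
    rw [hd0] at this
    simpa using this
  -- uniform bound on ‖T^t‖ for t < M
  set C₀ : ℝ := 1 + ∑ t ∈ Finset.range M, ‖T ^ t‖ with hC₀def
  have hsum0 : 0 ≤ ∑ t ∈ Finset.range M, ‖T ^ t‖ :=
    Finset.sum_nonneg fun i _ => norm_nonneg _
  have hC₀pos : 0 < C₀ := by rw [hC₀def]; linarith
  have hC₀ : ∀ t, t < M → ‖T ^ t‖ ≤ C₀ := by
    intro t ht
    have h1 : ‖T ^ t‖ ≤ ∑ i ∈ Finset.range M, ‖T ^ i‖ :=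
      Finset.single_le_sum (fun i _ => norm_nonneg (T ^ i)) (Finset.mem_range.mpr ht)
    rw [hC₀def]; linarith
  set ε : ℝ := ‖φ‖ / (4 * C₀) with hεdef
  have hεpos : 0 < ε := div_pos hφpos (by linarith)
  obtain ⟨n, hn0, hne⟩ := hchaos.1 (Metric.ball 0 ε) (Metric.ball φ ε)
    Metric.isOpen_ball Metric.isOpen_ball
    ⟨0, Metric.mem_ball_self hεpos⟩ ⟨φ, Metric.mem_ball_self hεpos⟩
  obtain ⟨y, ⟨ψ, hψmem, rfl⟩, hymem⟩ := hne
  have hψ : ‖ψ‖ < ε := mem_ball_zero_iff.mp hψmem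
  have hyφ : ‖adjOp (cosOp T S n) ψ - φ‖ < ε := by
    rw [← dist_eq_norm]; exact Metric.mem_ball.mp hymem
  have hkey : ∀ g : F, ‖φ ((S^n) g)‖ ≤ 2 * ε * ‖g‖ := by
    intro g
    have e1 : (φ - adjOp (cosOp T S n) ψ) ((S^n) g) + ψ ((cosOp T S n) ((S^n) g))
        = φ ((S^n) g) := by
      simp [ContinuousLinearMap.sub_apply, adjOp_apply]
    have b1 : ‖(φ - adjOp (cosOp T S n) ψ) ((S^n) g)‖ ≤ ε * ‖g‖ := by
      calc ‖(φ - adjOp (cosOp T S n) ψ) ((S^n) g)‖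
          ≤ ‖φ - adjOp (cosOp T S n) ψ‖ * ‖(S^n) g‖ :=
            (φ - adjOp (cosOp T S n) ψ).le_opNorm _
      _ ≤ ε * ‖g‖ := by
          have h1 : ‖φ - adjOp (cosOp T S n) ψ‖ ≤ ε := by
            rw [norm_sub_rev]; exact le_of_lt hyφ
          exact mul_le_mul h1 (hSn n g) (norm_nonneg _) hεpos.le
    have b2 : ‖ψ ((cosOp T S n) ((S^n) g))‖ ≤ ε * ‖g‖ := by
      have hcs : ‖(cosOp T S n) ((S^n) g)‖ ≤ ‖g‖ := by
        rw [cosOp_apply, hTSn]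
        calc ‖(2:ℂ)⁻¹ • (g + (S^n) ((S^n) g))‖
            = ‖(2:ℂ)⁻¹‖ * ‖g + (S^n) ((S^n) g)‖ := norm_smul _ _
        _ ≤ (1/2) * (‖g‖ + ‖g‖) := by
            have hh : ‖(2:ℂ)⁻¹‖ = 1/2 := by norm_num
            rw [hh]
            have := le_trans (norm_add_le g ((S^n) ((S^n) g)))
              (add_le_add le_rfl (le_trans (hSn n _) (hSn n g)))
            linarith
        _ = ‖g‖ := by ring
      calc ‖ψ ((cosOp T S n) ((S^n) g))‖ ≤ ‖ψ‖ * ‖(cosOp T S n) ((S^n) g)‖ :=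
            ψ.le_opNorm _
      _ ≤ ε * ‖g‖ := mul_le_mul hψ.le hcs (norm_nonneg _) hεpos.le
    calc ‖φ ((S^n) g)‖ = ‖(φ - adjOp (cosOp T S n) ψ) ((S^n) g)
          + ψ ((cosOp T S n) ((S^n) g))‖ := by rw [e1]
    _ ≤ ‖(φ - adjOp (cosOp T S n) ψ) ((S^n) g)‖ + ‖ψ ((cosOp T S n) ((S^n) g))‖ :=
        norm_add_le _ _
    _ ≤ ε * ‖g‖ + ε * ‖g‖ := add_le_add b1 b2
    _ = 2 * ε * ‖g‖ := by ring
  set t := n % M with htdef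
  have htM : t < M := Nat.mod_lt n hM0
  have hsplit : ∀ g : F, φ ((S^t) g) = φ ((S^n) g) := by
    intro g
    conv_rhs => rw [show n = M * (n / M) + t from by rw [htdef]; exact (Nat.div_add_mod n M).symm]
    rw [pow_apply_add, hconst]
  have hfinal : ∀ h : F, ‖φ h‖ ≤ 2 * ε * C₀ * ‖h‖ := by
    intro h
    have e : φ h = φ ((S^t) ((T^t) h)) := by rw [hSTn]
    calc ‖φ h‖ = ‖φ ((S^n) ((T^t) h))‖ := by rw [e, hsplit]
    _ ≤ 2 * ε * ‖(T^t) h‖ := hkey _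
    _ ≤ 2 * ε * (‖T^t‖ * ‖h‖) :=
        mul_le_mul_of_nonneg_left ((T^t).le_opNorm h) (by positivity)
    _ ≤ 2 * ε * (C₀ * ‖h‖) :=
        mul_le_mul_of_nonneg_left
          (mul_le_mul_of_nonneg_right (hC₀ t htM) (norm_nonneg h)) (by positivity)
    _ = 2 * ε * C₀ * ‖h‖ := by ring
  have hφle : ‖φ‖ ≤ 2 * ε * C₀ :=
    φ.opNorm_le_bound (by positivity) hfinal
  rw [hεdef] at hφle
  have hC₀ne : C₀ ≠ 0 := ne_of_gt hC₀pos
  have heq : 2 * (‖φ‖ / (4 * C₀)) * C₀ = ‖φ‖ / 2 := by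
    field_simp
    ring
  rw [heq] at hφle
  linarith

end Aux

/-- if the adjoint cosine operator sequence is chaotic on the dual space,
then `inf w < 1 < sup w`. -/
theorem stmt9 {X : Type*} [TopologicalSpace X] [MeasurableSpace X] [BorelSpace X]
    {F : Type*} [NormedAddCommGroup F] [NormedSpace ℂ F] [CompleteSpace F]
    (B : BanachFunctionSpace X F) (α : X ≃ X)
    (hmα : Measurable (⇑α)) (hmαs : Measurable (⇑α.symm))
    (hΩ : B.ConditionOmega α)
    (w : X → ℝ) (hw : IsWeightPair w) (T : F →L[ℂ] F)
    (hT : ∀ (f : F) (x : X), B.toFunL (T f) x = (w x : ℂ) * B.toFunL f (α x)) (S : F →L[ℂ] F) (hST : ∀ f : F, S (T f) = f) (hTS : ∀ f : F, T (S f) = f)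
    (K : Set X) (hK : IsCompact K) (hKne : K.Nonempty)
    (N : ℕ) (hN : 0 < N) (hdisj : ∀ n ≥ N, (⇑α)^[n] '' K ∩ K = ∅)
    (hchaos : IsChaotic fun n => adjOp (cosOp T S n)) :
    (⨅ x, w x) < 1 ∧ 1 < ⨆ x, w x := by
  obtain ⟨hsolid, hinv, hind, hdense⟩ := hΩ
  obtain ⟨hmw, ⟨Cb, hCb⟩, ⟨c, hc0, hcle⟩⟩ := hw
  obtain ⟨f₀, hf₀eq⟩ := hind K hK
  obtain ⟨x₀, hx₀⟩ := hKne
  have hf₀ : f₀ ≠ 0 := by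
    intro h
    have h1 : B.toFunL f₀ x₀ = 1 := by
      rw [hf₀eq]; simp [Set.indicator_of_mem hx₀]
    rw [h] at h1
    simp at h1
  have hwpos : ∀ x, 0 < w x := fun x => lt_of_lt_of_le hc0 (hcle x)
  have claim1 : ∃ x, w x < 1 := by
    by_contra hcon
    push_neg at hcon
    have hS : ∀ f : F, ‖S f‖ ≤ ‖f‖ := by
      intro f
      obtain ⟨g, hg, hgn⟩ := (hinv f).2
      have hdom : ∀ x, ‖B.toFunL (S f) x‖ ≤ ‖B.toFunL g x‖ := by
        intro x
        rw [hg]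
        have h1 := hT (S f) (α.symm x)
        rw [hTS f, Equiv.apply_symm_apply] at h1
        have h2 : ‖B.toFunL f (α.symm x)‖ = w (α.symm x) * ‖B.toFunL (S f) x‖ := by
          rw [h1, norm_mul, Complex.norm_real, Real.norm_eq_abs,
            abs_of_pos (hwpos (α.symm x))]
        have h3 : (1:ℝ) ≤ w (α.symm x) := hcon _
        have h4 : ‖(B.toFunL f ∘ ⇑α.symm) x‖ = ‖B.toFunL f (α.symm x)‖ := rfl
        rw [h4, h2]
        nlinarith [norm_nonneg (B.toFunL (S f) x)]
      obtain ⟨g', hg'1, hg'2⟩ := hsolid g (B.toFunL (S f)) (B.measurable' (S f)) hdom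
      have hgf : g' = S f := B.injective (by rw [hg'1])
      rw [← hgf]
      rw [hgn] at hg'2
      exact hg'2
    exact key T S hST hTS hS hchaos f₀ hf₀
  have claim2 : ∃ x, 1 < w x := by
    by_contra hcon
    push_neg at hcon
    have hTc : ∀ f : F, ‖T f‖ ≤ ‖f‖ := by
      intro f
      obtain ⟨g, hg, hgn⟩ := (hinv f).1
      have hdom : ∀ x, ‖B.toFunL (T f) x‖ ≤ ‖B.toFunL g x‖ := by
        intro x
        rw [hg, hT f x]
        have h4 : ‖(B.toFunL f ∘ ⇑α) x‖ = ‖B.toFunL f (α x)‖ := rfl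
        rw [h4, norm_mul, Complex.norm_real, Real.norm_eq_abs, abs_of_pos (hwpos x)]
        nlinarith [norm_nonneg (B.toFunL f (α x)), hcon x, hwpos x]
      obtain ⟨g', hg'1, hg'2⟩ := hsolid g (B.toFunL (T f)) (B.measurable' (T f)) hdom
      have hgf : g' = T f := B.injective (by rw [hg'1])
      rw [← hgf]
      rw [hgn] at hg'2
      exact hg'2
    have hch' : IsChaotic fun n => adjOp (cosOp S T n) := by
      have he : (fun n => adjOp (cosOp S T n)) = (fun n => adjOp (cosOp T S n)) := by
        funext n
        unfold cosOp
        rw [add_comm]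
      rw [he]; exact hchaos
    exact key S T hTS hST hTc hch' f₀ hf₀
  obtain ⟨x₁, hx₁⟩ := claim1
  obtain ⟨x₂, hx₂⟩ := claim2
  constructor
  · refine lt_of_le_of_lt (ciInf_le ?_ x₁) hx₁
    exact ⟨c, fun y hy => by obtain ⟨x, rfl⟩ := hy; exact hcle x⟩
  · refine lt_of_lt_of_le hx₂ (le_ciSup ?_ x₂)
    exact ⟨Cb, fun y hy => by obtain ⟨x, rfl⟩ := hy; exact hCb x⟩
end

section
/- Let X be a topological space, let α : X → X be a bijection such that α and α⁻¹ are Borel measurable, let F be a solid, α-invariant Banach function space on X, and let w and 1/w both be weights on X. Then for every n ∈ ℕ and f ∈ F, ‖S^n_{α,w} f‖_F ≤ (inf_{x∈X} w(x))^{−n} · ‖f‖_F, where S_{α,w} := T_{α,w}⁻¹. Consequently, if inf_{x∈X} w(x) > 1, then lim_{n→∞} S^n_{α,w} f = 0 in F for every f ∈ F. -/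
open Filter Topology

/-- `‖Sⁿf‖ ≤ (inf w)⁻ⁿ ‖f‖`; consequently if `inf w > 1` then `Sⁿf → 0`. -/
theorem stmt15 {X : Type*} [TopologicalSpace X] [MeasurableSpace X] [BorelSpace X]
    {F : Type*} [NormedAddCommGroup F] [NormedSpace ℂ F] [CompleteSpace F]
    (B : BanachFunctionSpace X F) (α : X ≃ X)
    (hmα : Measurable (⇑α)) (hmαs : Measurable (⇑α.symm))
    (hsolid : B.IsSolid) (hinv : B.IsInvariant α)
    (w : X → ℝ) (hw : IsWeightPair w) (T : F →L[ℂ] F)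
    (hT : ∀ (f : F) (x : X), B.toFunL (T f) x = (w x : ℂ) * B.toFunL f (α x)) (S : F →L[ℂ] F) (hST : ∀ f : F, S (T f) = f) (hTS : ∀ f : F, T (S f) = f) :
    (∀ n : ℕ, 0 < n → ∀ f : F, ‖(S ^ n) f‖ ≤ ((⨅ x, w x)⁻¹) ^ n * ‖f‖) ∧
    (1 < (⨅ x, w x) → ∀ f : F, Tendsto (fun n : ℕ => (S ^ n) f) atTop (𝓝 0)) := by
  by_cases hX : Nonempty X
  · -- X nonempty
    obtain ⟨hwmeas, hCbd, c₀, hc₀pos, hc₀le⟩ := hw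
    set c : ℝ := ⨅ x, w x with hc
    have hbdd : BddBelow (Set.range w) := ⟨c₀, by rintro _ ⟨x, rfl⟩; exact hc₀le x⟩
    have hcpos : 0 < c := lt_of_lt_of_le hc₀pos (le_ciInf hc₀le)
    have hcle : ∀ x, c ≤ w x := fun x => ciInf_le hbdd x
    -- key single-step bound
    have key : ∀ f : F, ‖S f‖ ≤ c⁻¹ * ‖f‖ := by
      intro f
      set g : F := S f with hg
      have hpt : ∀ x, ‖(B.toFunL g ∘ ⇑α) x‖ ≤ ‖B.toFunL (((c⁻¹ : ℝ) : ℂ) • f) x‖ := by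
        intro x
        have hfx : B.toFunL f x = (w x : ℂ) * B.toFunL g (α x) := by
          conv_lhs => rw [← hTS f]
          exact hT g x
        have hnorm : ‖B.toFunL f x‖ = w x * ‖B.toFunL g (α x)‖ := by
          rw [hfx, norm_mul, Complex.norm_real, Real.norm_eq_abs,
            abs_of_pos (lt_of_lt_of_le hc₀pos (hc₀le x))]
        have h1 : c * ‖B.toFunL g (α x)‖ ≤ ‖B.toFunL f x‖ := by
          rw [hnorm]
          exact mul_le_mul_of_nonneg_right (hcle x) (norm_nonneg _)
        have h2 : ‖(B.toFunL g ∘ ⇑α) x‖ ≤ c⁻¹ * ‖B.toFunL f x‖ := by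
          have := mul_le_mul_of_nonneg_left h1 (le_of_lt (inv_pos.mpr hcpos))
          rwa [← mul_assoc, inv_mul_cancel₀ (ne_of_gt hcpos), one_mul] at this
        calc ‖(B.toFunL g ∘ ⇑α) x‖ ≤ c⁻¹ * ‖B.toFunL f x‖ := h2
        _ = ‖B.toFunL (((c⁻¹ : ℝ) : ℂ) • f) x‖ := by
            rw [map_smul, Pi.smul_apply, norm_smul, Complex.norm_real, Real.norm_eq_abs,
              abs_of_pos (inv_pos.mpr hcpos)]
      have hmeas : Measurable (B.toFunL g ∘ ⇑α) := (B.measurable' g).comp hmα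
      obtain ⟨g', hg'eq, hg'le⟩ := hsolid (((c⁻¹ : ℝ) : ℂ) • f) (B.toFunL g ∘ ⇑α) hmeas hpt
      obtain ⟨g'', hg''eq, hg''norm⟩ := (hinv g').2
      have : B.toFunL g'' = B.toFunL g := by
        rw [hg''eq, hg'eq]
        funext x
        simp [Function.comp]
      have hgg : g'' = g := B.injective this
      have : ‖g‖ ≤ ‖(((c⁻¹ : ℝ) : ℂ) • f)‖ := by
        rw [← hgg, hg''norm]; exact hg'le
      rwa [norm_smul, Complex.norm_real, Real.norm_eq_abs,
        abs_of_pos (inv_pos.mpr hcpos)] at this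
    have main : ∀ n : ℕ, ∀ f : F, ‖(S ^ n) f‖ ≤ (c⁻¹) ^ n * ‖f‖ := by
      intro n
      induction n with
      | zero => intro f; simp
      | succ n ih =>
        intro f
        have h1 : (S ^ (n + 1)) f = (S ^ n) (S f) := by
          rw [pow_succ]; rfl
        rw [h1]
        calc ‖(S ^ n) (S f)‖ ≤ (c⁻¹) ^ n * ‖S f‖ := ih (S f)
        _ ≤ (c⁻¹) ^ n * (c⁻¹ * ‖f‖) := by
            exact mul_le_mul_of_nonneg_left (key f)
              (pow_nonneg (le_of_lt (inv_pos.mpr hcpos)) n)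
        _ = (c⁻¹) ^ (n + 1) * ‖f‖ := by ring
    refine ⟨fun n _ f => main n f, fun hc1 f => ?_⟩
    have hlt : c⁻¹ < 1 := inv_lt_one_of_one_lt₀ hc1
    have h0 : (0:ℝ) ≤ c⁻¹ := le_of_lt (inv_pos.mpr hcpos)
    have htend : Tendsto (fun n : ℕ => (c⁻¹) ^ n * ‖f‖) atTop (𝓝 0) := by
      have := tendsto_pow_atTop_nhds_zero_of_lt_one h0 hlt
      simpa using this.mul_const ‖f‖
    rw [tendsto_zero_iff_norm_tendsto_zero]
    exact squeeze_zero (fun n => norm_nonneg _) (fun n => main n f) htend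
  · -- X empty: F is a subsingleton
    have hsub : Subsingleton F := by
      constructor
      intro a b
      apply B.injective
      funext x
      exact absurd ⟨x⟩ hX
    constructor
    · intro n hn f
      have hf : f = 0 := Subsingleton.elim f 0
      subst hf
      simp [le_of_lt]
    · intro _ f
      have : ∀ n : ℕ, (S ^ n) f = 0 := fun n => Subsingleton.elim _ _
      simp only [this]; exact tendsto_const_nhds
end

section
/- Let X be a topological space, let α : X → X be a bijection such that α and α⁻¹ are Borel measurable, let F be a solid, α-invariant Banach function space on X containing the characteristic function of every compact subset of X, and let w and 1/w both be weights on X with inf_{x∈X} w(x) > 1. Let K be a compact subset of X with ‖χ_K‖_F > 0, let (D_k)_{k=1}^∞ be Borel subsets of K with lim_{k→∞} ‖χ_{K∖D_k}‖_F = 0, and let (n_k) be a strictly increasing sequence of positive integers. Then lim_{k→∞} ‖χ_{D_k} · ∏_{s=1}^{n_k} (w∘α^{−s})‖_F = ∞. -/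
open Filter Topology

/-- if `inf w > 1`, `‖χ_K‖ > 0` and `‖χ_{K∖D_k}‖ → 0`, then the norms of
`χ_{D_k} ∏_{s=1}^{n_k} w∘α⁻ˢ` tend to infinity. -/
theorem stmt18 {X : Type*} [TopologicalSpace X] [MeasurableSpace X] [BorelSpace X]
    {F : Type*} [NormedAddCommGroup F] [NormedSpace ℂ F] [CompleteSpace F]
    (B : BanachFunctionSpace X F) (α : X ≃ X)
    (hmα : Measurable (⇑α)) (hmαs : Measurable (⇑α.symm))
    (hsolid : B.IsSolid) (hinv : B.IsInvariant α) (hind : B.HasCompactIndicators)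
    (w : X → ℝ) (hw : IsWeightPair w)
    (hinf : 1 < ⨅ x, w x)
    (K : Set X) (hK : IsCompact K) (cK : F)
    (hcK : B.toFunL cK = Set.indicator K 1) (hcKpos : 0 < ‖cK‖)
    (D : ℕ → Set X) (hD : ∀ k, MeasurableSet (D k)) (hDK : ∀ k, D k ⊆ K)
    (g : ℕ → F) (hg : ∀ k, B.toFunL (g k) = Set.indicator (K \ D k) 1)
    (hg0 : Tendsto (fun k => ‖g k‖) atTop (𝓝 0))
    (nk : ℕ → ℕ) (hnk : StrictMono nk) (hnkpos : ∀ k, 0 < nk k)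
    (h : ℕ → F)
    (hh : ∀ k, B.toFunL (h k) = Set.indicator (D k)
      (fun x => ((∏ s ∈ Finset.Icc 1 (nk k), w ((⇑α.symm)^[s] x) : ℝ) : ℂ))) :
    Tendsto (fun k => ‖h k‖) atTop atTop := by
  obtain ⟨hwmeas, ⟨C, hC⟩, c, hc, hcw⟩ := hw
  set m := ⨅ x, w x with hm
  have hbdd : BddBelow (Set.range w) := ⟨c, by rintro _ ⟨x, rfl⟩; exact hcw x⟩
  have hmle : ∀ x, m ≤ w x := fun x => ciInf_le hbdd x
  have hm1 : (1:ℝ) < m := hinf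
  have hm0 : (0:ℝ) < m := lt_trans one_pos hm1
  have hd : ∀ k, B.toFunL (cK - g k) = Set.indicator (D k) (1 : X → ℂ) := by
    intro k
    rw [map_sub, hcK, hg]
    funext x
    by_cases hx : x ∈ D k
    · have hxK : x ∈ K := hDK k hx
      simp [Set.indicator, hx, hxK]
    · by_cases hxK : x ∈ K <;> simp [Set.indicator, hx, hxK]
  have key : ∀ k, m ^ (nk k) * ‖cK - g k‖ ≤ ‖h k‖ := by
    intro k
    have hmeasg : Measurable (fun x => ((m ^ nk k : ℝ):ℂ) • Set.indicator (D k) (1 : X → ℂ) x) := by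
      exact Measurable.const_smul (measurable_one.indicator (hD k)) (((m ^ nk k : ℝ):ℂ))
    have hptw : ∀ x, ‖((m ^ nk k : ℝ):ℂ) • Set.indicator (D k) (1 : X → ℂ) x‖ ≤ ‖B.toFunL (h k) x‖ := by
      intro x
      rw [hh]
      by_cases hx : x ∈ D k
      · have hprod : m ^ nk k ≤ ∏ s ∈ Finset.Icc 1 (nk k), w ((⇑α.symm)^[s] x) := by
          calc m ^ nk k = ∏ _s ∈ Finset.Icc 1 (nk k), m := by
                rw [Finset.prod_const, Nat.card_Icc]; norm_num
            _ ≤ _ := Finset.prod_le_prod (fun _ _ => le_of_lt hm0) (fun s _ => hmle _)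
        simp only [Set.indicator_of_mem hx, Pi.one_apply, smul_eq_mul, mul_one]
        rw [Complex.norm_real, Complex.norm_real]
        rw [Real.norm_of_nonneg (le_of_lt (pow_pos hm0 _)),
          Real.norm_of_nonneg (le_trans (le_of_lt (pow_pos hm0 _)) hprod)]
        exact hprod
      · simp [Set.indicator_of_notMem hx]
    obtain ⟨g', hg', hgn⟩ := hsolid (h k) _ hmeasg hptw
    have hgeq : g' = ((m ^ nk k : ℝ):ℂ) • (cK - g k) := by
      apply B.injective
      rw [hg', map_smul, hd]
      rfl
    rw [hgeq, norm_smul, Complex.norm_real,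
      Real.norm_of_nonneg (le_of_lt (pow_pos hm0 _))] at hgn
    exact hgn
  have hev : ∀ᶠ k in atTop, m ^ nk k * (‖cK‖ / 2) ≤ ‖h k‖ := by
    have : ∀ᶠ k in atTop, ‖g k‖ < ‖cK‖ / 2 :=
      hg0.eventually (gt_mem_nhds (by linarith))
    filter_upwards [this] with k hk
    have h1 : ‖cK‖ / 2 ≤ ‖cK - g k‖ := by
      have := norm_sub_norm_le cK (g k)
      have h2 := norm_sub_le cK (g k)
      calc ‖cK‖ / 2 ≤ ‖cK‖ - ‖g k‖ := by linarith
        _ ≤ ‖cK - g k‖ := norm_sub_norm_le cK (g k)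
    calc m ^ nk k * (‖cK‖ / 2) ≤ m ^ nk k * ‖cK - g k‖ :=
          mul_le_mul_of_nonneg_left h1 (le_of_lt (pow_pos hm0 _))
      _ ≤ ‖h k‖ := key k
  refine tendsto_atTop_mono' atTop hev ?_
  have t1 : Tendsto (fun n : ℕ => m ^ n) atTop atTop :=
    tendsto_pow_atTop_atTop_of_one_lt hm1
  exact (t1.comp hnk.tendsto_atTop).atTop_mul_const (by linarith)
end

section
/- Let X be a topological space, let α : X → X be a bijection such that α and α⁻¹ are Borel measurable, let F be a solid, α-invariant Banach function space on X, and let w and 1/w both be weights on X. Let n ∈ ℕ and g ∈ F be such that the series Σ_{l=1}^∞ ‖T^{l·n}_{α,w} g‖_F and Σ_{l=1}^∞ ‖S^{l·n}_{α,w} g‖_F converge, where S_{α,w} := T_{α,w}⁻¹. Then the vector v := g + Σ_{l=1}^∞ T^{l·n}_{α,w} g + Σ_{l=1}^∞ S^{l·n}_{α,w} g is well defined in F and satisfies C^{(k·n)}_{α,w} v = v for every k ∈ ℕ, where C^{(m)}_{α,w} := (1/2)(T_{α,w}^m + S_{α,w}^m); in particular, v is a periodic element of the sequence (C^{(m)}_{α,w})_{m∈ℕ₀}.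 -/
open Filter Topology

/-- the vector `v = g + Σ_l T^{ln} g + Σ_l S^{ln} g` is a fixed point of the
operators `C^{(kn)}`, hence a periodic element of the cosine operator sequence. -/
theorem stmt19 {X : Type*} [TopologicalSpace X] [MeasurableSpace X] [BorelSpace X]
    {F : Type*} [NormedAddCommGroup F] [NormedSpace ℂ F] [CompleteSpace F]
    (B : BanachFunctionSpace X F) (α : X ≃ X)
    (hmα : Measurable (⇑α)) (hmαs : Measurable (⇑α.symm))
    (hsolid : B.IsSolid) (hinv : B.IsInvariant α)
    (w : X → ℝ) (hw : IsWeightPair w) (T : F →L[ℂ] F)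
    (hT : ∀ (f : F) (x : X), B.toFunL (T f) x = (w x : ℂ) * B.toFunL f (α x)) (S : F →L[ℂ] F) (hST : ∀ f : F, S (T f) = f) (hTS : ∀ f : F, T (S f) = f)
    (n : ℕ) (hn : 0 < n) (g : F)
    (hsumT : Summable fun l : ℕ => ‖(T ^ ((l + 1) * n)) g‖)
    (hsumS : Summable fun l : ℕ => ‖(S ^ ((l + 1) * n)) g‖) :
    (∀ k : ℕ, 0 < k →
      cosOp T S (k * n)
        (g + (∑' l : ℕ, (T ^ ((l + 1) * n)) g) + ∑' l : ℕ, (S ^ ((l + 1) * n)) g) =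
        g + (∑' l : ℕ, (T ^ ((l + 1) * n)) g) + ∑' l : ℕ, (S ^ ((l + 1) * n)) g) ∧
    (g + (∑' l : ℕ, (T ^ ((l + 1) * n)) g) + ∑' l : ℕ, (S ^ ((l + 1) * n)) g) ∈
      periodicSet (cosOp T S) := by
  classical
  have hT1 : T * S = 1 := ContinuousLinearMap.ext hTS
  have hS1 : S * T = 1 := ContinuousLinearMap.ext hST
  let U : (F →L[ℂ] F)ˣ := ⟨T, S, hT1, hS1⟩
  let V : (F →L[ℂ] F)ˣ := U ^ n
  have hVT : ∀ l : ℕ, ((V ^ (l : ℤ) : (F →L[ℂ] F)ˣ) : F →L[ℂ] F) = T ^ (l * n) := by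
    intro l
    show ((((U ^ n) ^ (l : ℤ)) : (F →L[ℂ] F)ˣ) : F →L[ℂ] F) = T ^ (l * n)
    rw [zpow_natCast, ← pow_mul, Units.val_pow_eq_pow_val]
    rw [show ((U : (F →L[ℂ] F)ˣ) : F →L[ℂ] F) = T from rfl, mul_comm]
  have hVS : ∀ l : ℕ, ((V ^ (-(l : ℤ)) : (F →L[ℂ] F)ˣ) : F →L[ℂ] F) = S ^ (l * n) := by
    intro l
    rw [zpow_neg, zpow_natCast]
    show ((((U ^ n) ^ l)⁻¹ : (F →L[ℂ] F)ˣ) : F →L[ℂ] F) = S ^ (l * n)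
    rw [← pow_mul, ← inv_pow, Units.val_pow_eq_pow_val]
    rw [show ((U⁻¹ : (F →L[ℂ] F)ˣ) : F →L[ℂ] F) = S from rfl, mul_comm]
  set u : ℤ → F := fun m => ((V ^ m : (F →L[ℂ] F)ˣ) : F →L[ℂ] F) g with hu
  set A : F := ∑' l : ℕ, (T ^ ((l + 1) * n)) g with hA
  set B : F := ∑' l : ℕ, (S ^ ((l + 1) * n)) g with hB
  have hAsum : HasSum (fun l : ℕ => (T ^ ((l + 1) * n)) g) A :=
    (Summable.of_norm hsumT).hasSum
  have hBsum : HasSum (fun l : ℕ => (S ^ ((l + 1) * n)) g) B :=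
    (Summable.of_norm hsumS).hasSum
  have hAsum' : HasSum (fun l : ℕ => u ((l + 1 : ℕ) : ℤ)) A := by
    refine hAsum.congr_fun fun l => ?_
    show ((V ^ (((l + 1 : ℕ)) : ℤ) : (F →L[ℂ] F)ˣ) : F →L[ℂ] F) g = _
    rw [hVT (l + 1)]
  have hu0 : u 0 = g := by
    show ((V ^ (0 : ℤ) : (F →L[ℂ] F)ˣ) : F →L[ℂ] F) g = g
    simp
  have hApos : HasSum (fun m : ℕ => u m) (A + g) := by
    have h := (hasSum_nat_add_iff (f := fun m : ℕ => u m) (g := A) 1).mp hAsum'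
    simpa [hu0] using h
  have hBneg : HasSum (fun l : ℕ => u (-(l + 1))) B := by
    refine hBsum.congr_fun fun l => ?_
    have hc : (-((l : ℤ) + 1)) = -(((l + 1 : ℕ)) : ℤ) := by push_cast; ring
    show ((V ^ (-((l : ℤ) + 1)) : (F →L[ℂ] F)ˣ) : F →L[ℂ] F) g = _
    rw [hc, hVS (l + 1)]
  have hv : HasSum u (A + g + B) := hApos.of_nat_of_neg_add_one hBneg
  have hveq : A + g + B = g + A + B := by abel
  rw [hveq] at hv
  -- the key fixed point computation
  have key : ∀ k : ℕ, 0 < k → cosOp T S (k * n) (g + A + B) = g + A + B := by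
    intro k hk
    have hTfix : (T ^ (k * n)) (g + A + B) = g + A + B := by
      have h1 : HasSum (fun m : ℤ => (T ^ (k * n)) (u m)) ((T ^ (k * n)) (g + A + B)) :=
        (T ^ (k * n)).hasSum hv
      have h2 : HasSum (fun m : ℤ => u (m + k)) ((T ^ (k * n)) (g + A + B)) := by
        refine h1.congr_fun fun m => ?_
        show ((V ^ (m + (k : ℤ)) : (F →L[ℂ] F)ˣ) : F →L[ℂ] F) g
            = (T ^ (k * n)) (((V ^ m : (F →L[ℂ] F)ˣ) : F →L[ℂ] F) g)
        rw [← hVT k, ← ContinuousLinearMap.comp_apply, ← ContinuousLinearMap.mul_def,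
          ← Units.val_mul, ← zpow_add, add_comm]
      have h3 : HasSum (fun m : ℤ => u (m + k)) (g + A + B) := by
        have h := (Equiv.addRight (k : ℤ)).hasSum_iff.mpr hv
        simpa [Function.comp_def] using h
      exact h2.unique h3
    have hSfix : (S ^ (k * n)) (g + A + B) = g + A + B := by
      have h1 : HasSum (fun m : ℤ => (S ^ (k * n)) (u m)) ((S ^ (k * n)) (g + A + B)) :=
        (S ^ (k * n)).hasSum hv
      have h2 : HasSum (fun m : ℤ => u (m + -k)) ((S ^ (k * n)) (g + A + B)) := by
        refine h1.congr_fun fun m => ?_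
        show ((V ^ (m + -(k : ℤ)) : (F →L[ℂ] F)ˣ) : F →L[ℂ] F) g
            = (S ^ (k * n)) (((V ^ m : (F →L[ℂ] F)ˣ) : F →L[ℂ] F) g)
        rw [← hVS k, ← ContinuousLinearMap.comp_apply, ← ContinuousLinearMap.mul_def,
          ← Units.val_mul, ← zpow_add, add_comm]
      have h3 : HasSum (fun m : ℤ => u (m + -k)) (g + A + B) := by
        have h := (Equiv.addRight (-(k : ℤ))).hasSum_iff.mpr hv
        simpa [Function.comp_def] using h
      exact h2.unique h3
    show ((2 : ℂ)⁻¹ • (T ^ (k * n) + S ^ (k * n))) (g + A + B) = g + A + B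
    rw [ContinuousLinearMap.smul_apply, ContinuousLinearMap.add_apply, hTfix, hSfix,
      ← two_smul ℂ (g + A + B), smul_smul]
    norm_num
  exact ⟨key, n, hn, fun k hk => key k hk⟩
end
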